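/- arXiv:1808.09875 — 4 statements merged into one kernel-verified Lean document; each statement's English description precedes it below -/
import Mathlib

section
/- Internalization: Let CS be an axiomatically appropriate constant specification for FOLPb, p_0,...,p_k justification variables, X_0,...,X_k finite sets of individual variables, and X = X_0 ∪ ... ∪ X_k. If p_0:_{X_0}φ_0, ..., p_k:_{X_k}φ_k ⊢_CS ψ, then there exists a justification term t(p_0,...,p_k) such that p_0:_{X_0}φ_0, ..., p_k:_{X_k}φ_k ⊢_CS t:_X ψ. -/
/-- Justification terms of first-order justification logic (FOLPb / FOJT45). -/
inductive JTerm : Type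
  | jvar : Nat → JTerm
  | jconst : Nat → JTerm
  | app : JTerm → JTerm → JTerm
  | plus : JTerm → JTerm → JTerm
  | bang : JTerm → JTerm
  | bb : JTerm → JTerm
  | gen : Nat → JTerm → JTerm
  | quest : JTerm → JTerm
  deriving DecidableEq

namespace JTerm

/-- Basic variables occurring as `gen` subscripts in a term. -/
def gvars : JTerm → Finset Nat
  | jvar _ => ∅
  | jconst _ => ∅
  | app t s => t.gvars ∪ s.gvars
  | plus t s => t.gvars ∪ s.gvars
  | bang t => t.gvars
  | bb t => t.gvars
  | gen x t => insert x t.gvars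
  | quest t => t.gvars

end JTerm

/-- Formulas of first-order justification logic.  Individual "variables" are either
basic variables (`Sum.inl n`, which may be quantified and appear as `gen` subscripts)
or extra constants from `V` (witness variables / domain members), which are never
quantified. -/
inductive Fml (V : Type) : Type
  | atom : Nat → List (Nat ⊕ V) → Fml V
  | bot : Fml V
  | imp : Fml V → Fml V → Fml V
  | all : Nat → Fml V → Fml V
  | box : JTerm → Finset (Nat ⊕ V) → Fml V → Fml V

namespace Fml

variable {V : Type} [DecidableEq V]

def neg (φ : Fml V) : Fml V := φ.imp .bot
def orr (φ ψ : Fml V) : Fml V := φ.neg.imp ψ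
def andd (φ ψ : Fml V) : Fml V := (φ.imp ψ.neg).neg
def ex (x : Nat) (φ : Fml V) : Fml V := (Fml.all x φ.neg).neg

/-- Free individual variables.  Following the paper, `fv (t :_X φ) = X`. -/
def fv : Fml V → Finset (Nat ⊕ V)
  | atom _ l => l.toFinset
  | bot => ∅
  | imp φ ψ => φ.fv ∪ ψ.fv
  | all x φ => φ.fv \ {Sum.inl x}
  | box _ X _ => X

/-- Substitution of `e` for the free occurrences of the individual variable `x`. -/
def subst (x e : Nat ⊕ V) : Fml V → Fml V
  | atom P l => atom P (l.map fun v => if v = x then e else v)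
  | bot => bot
  | imp φ ψ => imp (subst x e φ) (subst x e ψ)
  | all y φ => if x = Sum.inl y then all y φ else all y (subst x e φ)
  | box t X φ =>
      if x ∈ X then box t (X.image fun v => if v = x then e else v) (subst x e φ)
      else box t X φ

/-- `e` is free for `x` in the given formula. -/
def freeFor (e x : Nat ⊕ V) : Fml V → Prop
  | atom _ _ => True
  | bot => True
  | imp φ ψ => freeFor e x φ ∧ freeFor e x ψ
  | all y φ => x ∉ (Fml.all y φ).fv ∨ (e ≠ Sum.inl y ∧ freeFor e x φ)
  | box _ X φ => freeFor e x φ ∧ (e ∈ φ.fv → e ∈ X)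

/-- All individual variables occurring in a formula (free, bound, in subscripts,
or as `gen` subscripts of justification terms). -/
def allVars : Fml V → Finset (Nat ⊕ V)
  | atom _ l => l.toFinset
  | bot => ∅
  | imp φ ψ => φ.allVars ∪ ψ.allVars
  | all x φ => insert (Sum.inl x) φ.allVars
  | box t X φ => X ∪ t.gvars.image Sum.inl ∪ φ.allVars

/-- The set of witness variables / domain constants (`Sum.inr`-variables) occurring
in a formula. -/
def wvars (φ : Fml V) : Finset (Nat ⊕ V) := φ.allVars.filter fun v => v.isRight

/-- Free basic variables. -/
def fbv (φ : Fml V) : Finset Nat :=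
  φ.fv.biUnion fun v => match v with | Sum.inl n => {n} | Sum.inr _ => ∅

/-- Universal closure (over the free basic variables). -/
noncomputable def close (φ : Fml V) : Fml V := φ.fbv.toList.foldr Fml.all φ

/-- Renaming of the free individual variables of a formula. -/
def renameFree (ρ : (Nat ⊕ V) → (Nat ⊕ V)) : Fml V → Fml V
  | atom P l => atom P (l.map ρ)
  | bot => bot
  | imp φ ψ => imp (renameFree ρ φ) (renameFree ρ ψ)
  | all y φ => all y (renameFree (Function.update ρ (Sum.inl y) (Sum.inl y)) φ)
  | box t X φ => box t (X.image ρ) (renameFree (fun v => if v ∈ X then ρ v else v) φ)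

/-- Replacement of *every* occurrence of the individual variable `a` by `e`
(used for witness variables, which are never bound). -/
def replaceAll (a e : Nat ⊕ V) : Fml V → Fml V
  | atom P l => atom P (l.map fun v => if v = a then e else v)
  | bot => bot
  | imp φ ψ => imp (replaceAll a e φ) (replaceAll a e ψ)
  | all x φ => all x (replaceAll a e φ)
  | box t X φ => box t (X.image fun v => if v = a then e else v) (replaceAll a e φ)

/-- Change the type of extra constants. -/
def vmap {V' : Type} [DecidableEq V'] (f : V → V') : Fml V → Fml V'
  | atom P l => atom P (l.map (Sum.map id f))
  | bot => bot
  | imp φ ψ => imp (vmap f φ) (vmap f ψ)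
  | all x φ => all x (vmap f φ)
  | box t X φ => box t (X.image (Sum.map id f)) (vmap f φ)

def size : Fml V → Nat
  | atom _ _ => 1
  | bot => 1
  | imp φ ψ => φ.size + ψ.size + 1
  | all _ φ => φ.size + 1
  | box _ _ φ => φ.size + 1

/-- Simultaneous substitution of all free basic variables. -/
def instAll (σ : Nat → Nat ⊕ V) : Fml V → Fml V
  | atom P l => atom P (l.map fun v => match v with | Sum.inl n => σ n | w => w)
  | bot => bot
  | imp φ ψ => imp (instAll σ φ) (instAll σ ψ)
  | all x φ => all x (instAll (Function.update σ x (Sum.inl x)) φ)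
  | box t X φ =>
      box t (X.image fun v => match v with | Sum.inl n => σ n | w => w)
        (instAll (fun n => if Sum.inl n ∈ X then σ n else Sum.inl n) φ)

theorem size_subst (x e : Nat ⊕ V) : ∀ φ : Fml V, (φ.subst x e).size = φ.size := by
  intro φ
  induction φ with
  | atom P l => simp [subst, size]
  | bot => simp [subst, size]
  | imp φ ψ ihφ ihψ => simp [subst, size, ihφ, ihψ]
  | all y φ ih => by_cases h : x = Sum.inl y <;> simp [subst, size, h, ih]
  | box t X φ ih => by_cases h : x ∈ X <;> simp [subst, size, h, ih]

theorem size_instAll : ∀ (φ : Fml V) (σ : Nat → Nat ⊕ V), (φ.instAll σ).size = φ.size := by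
  intro φ
  induction φ with
  | atom P l => intro σ; simp [instAll, size]
  | bot => intro σ; simp [instAll, size]
  | imp φ ψ ihφ ihψ => intro σ; simp [instAll, size, ihφ, ihψ]
  | all y φ ih => intro σ; simp [instAll, size, ih]
  | box t X φ ih => intro σ; simp [instAll, size, ih]

end Fml

/-- The two logics considered in the paper. -/
inductive Logic : Type
  | folpb
  | fojt45

/-- Axioms of the systems: **A1** (a standard Hilbert axiomatization of classical
first-order logic), **A2**, **A3**, **B1**–**B5**, together with the Barcan axiom
**Bb** (for FOLPb only) and negative introspection **B6** (for FOJT45 only). -/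
inductive IsAxiom {V : Type} [DecidableEq V] : Logic → Fml V → Prop
  | a1k (L) (φ ψ : Fml V) : IsAxiom L (φ.imp (ψ.imp φ))
  | a1s (L) (φ ψ χ : Fml V) :
      IsAxiom L ((φ.imp (ψ.imp χ)).imp ((φ.imp ψ).imp (φ.imp χ)))
  | a1dne (L) (φ : Fml V) : IsAxiom L (φ.neg.neg.imp φ)
  | a1inst (L) (x : Nat) (e : Nat ⊕ V) (φ : Fml V) (h : φ.freeFor e (Sum.inl x)) :
      IsAxiom L ((Fml.all x φ).imp (φ.subst (Sum.inl x) e))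
  | a1allImp (L) (x : Nat) (φ ψ : Fml V) :
      IsAxiom L ((Fml.all x (φ.imp ψ)).imp ((Fml.all x φ).imp (Fml.all x ψ)))
  | a1vac (L) (x : Nat) (φ : Fml V) (h : Sum.inl x ∉ φ.fv) :
      IsAxiom L (φ.imp (Fml.all x φ))
  | a2 (L) (t : JTerm) (X : Finset (Nat ⊕ V)) (y : Nat ⊕ V) (φ : Fml V)
      (h : y ∉ φ.fv) :
      IsAxiom L ((Fml.box t (insert y X) φ).imp (Fml.box t X φ))
  | a3 (L) (t : JTerm) (X : Finset (Nat ⊕ V)) (y : Nat ⊕ V) (φ : Fml V) :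
      IsAxiom L ((Fml.box t X φ).imp (Fml.box t (insert y X) φ))
  | b1 (L) (t : JTerm) (X : Finset (Nat ⊕ V)) (φ : Fml V) :
      IsAxiom L ((Fml.box t X φ).imp φ)
  | b2 (L) (t s : JTerm) (X : Finset (Nat ⊕ V)) (φ ψ : Fml V) :
      IsAxiom L ((Fml.box t X (φ.imp ψ)).imp
        ((Fml.box s X φ).imp (Fml.box (t.app s) X ψ)))
  | b3l (L) (t s : JTerm) (X : Finset (Nat ⊕ V)) (φ : Fml V) :
      IsAxiom L ((Fml.box t X φ).imp (Fml.box (t.plus s) X φ))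
  | b3r (L) (t s : JTerm) (X : Finset (Nat ⊕ V)) (φ : Fml V) :
      IsAxiom L ((Fml.box s X φ).imp (Fml.box (t.plus s) X φ))
  | b4 (L) (t : JTerm) (X : Finset (Nat ⊕ V)) (φ : Fml V) :
      IsAxiom L ((Fml.box t X φ).imp (Fml.box t.bang X (Fml.box t X φ)))
  | b5 (L) (t : JTerm) (X : Finset (Nat ⊕ V)) (x : Nat) (φ : Fml V)
      (h : Sum.inl x ∉ X) :
      IsAxiom L ((Fml.box t X φ).imp (Fml.box (t.gen x) X (Fml.all x φ)))
  | bb (t : JTerm) (X : Finset (Nat ⊕ V)) (y : Nat) (φ : Fml V)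
      (h : Sum.inl y ∉ X) :
      IsAxiom Logic.folpb
        ((Fml.all y (Fml.box t (insert (Sum.inl y) X) φ)).imp
          (Fml.box t.bb X (Fml.all y φ)))
  | b6 (t : JTerm) (X : Finset (Nat ⊕ V)) (φ : Fml V) :
      IsAxiom Logic.fojt45
        ((Fml.box t X φ).neg.imp (Fml.box t.quest X (Fml.box t X φ).neg))

/-- Derivability from a set `Γ` of assumptions, with extra axioms from the constant
specification `CS`; generalization is only applied to variables not free in `Γ`. -/
inductive Deriv {V : Type} [DecidableEq V] (L : Logic) (CS : Set (Fml V))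
    (Γ : Set (Fml V)) : Fml V → Prop
  | ax {φ : Fml V} : IsAxiom L φ → Deriv L CS Γ φ
  | cs {φ : Fml V} : φ ∈ CS → Deriv L CS Γ φ
  | hyp {φ : Fml V} : φ ∈ Γ → Deriv L CS Γ φ
  | mp {φ ψ : Fml V} : Deriv L CS Γ (φ.imp ψ) → Deriv L CS Γ φ → Deriv L CS Γ ψ
  | genR {φ : Fml V} {x : Nat} : Deriv L CS Γ φ →
      (∀ ψ ∈ Γ, Sum.inl x ∉ ψ.fv) → Deriv L CS Γ (Fml.all x φ)

/-- `CS` is a constant specification: each member has the form `c : ψ` with `ψ` an axiom. -/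
def IsCS {V : Type} [DecidableEq V] (L : Logic) (CS : Set (Fml V)) : Prop :=
  ∀ χ ∈ CS, ∃ (c : Nat) (φ : Fml V),
    χ = Fml.box (JTerm.jconst c) ∅ φ ∧ IsAxiom L φ

/-- `CS` is axiomatically appropriate. -/
def AxAppropriate {V : Type} [DecidableEq V] (L : Logic) (CS : Set (Fml V)) : Prop :=
  ∀ φ : Fml V, IsAxiom L φ → ∃ c : Nat, Fml.box (JTerm.jconst c) ∅ φ ∈ CS

def Consistent {V : Type} [DecidableEq V] (L : Logic) (CS Γ : Set (Fml V)) : Prop :=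
  ¬ Deriv L CS Γ Fml.bot

def MaxConsistent {V : Type} [DecidableEq V] (L : Logic) (CS Γ : Set (Fml V)) : Prop :=
  Consistent L CS Γ ∧ ∀ Δ : Set (Fml V), Γ ⊆ Δ → Consistent L CS Δ → Δ = Γ

/-- Formulas of the basic language (no witness variables). -/
abbrev FmlB := Fml Empty

/-- Henkin formulas: formulas possibly containing witness variables (`Sum.inr`). -/
abbrev FmlW := Fml Nat

/-- A basic-language formula regarded as a Henkin formula. -/
def liftB : FmlB → FmlW := Fml.vmap fun e => e.elim

/-- A Henkin formula containing no witness variables. -/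
def NoWitness (φ : FmlW) : Prop := ∀ v ∈ φ.allVars, v.isLeft = true

/-- Two formulas are variable variants: one is obtained from the other by a
bijective renaming of free individual variables. -/
def VarVariant {V : Type} [DecidableEq V] (φ ψ : Fml V) : Prop :=
  ∃ ρ : (Nat ⊕ V) → (Nat ⊕ V), Function.Bijective ρ ∧ ψ = Fml.renameFree ρ φ

/-- A constant specification is variant closed. -/
def VariantClosed {V : Type} [DecidableEq V] (CS : Set (Fml V)) : Prop :=
  ∀ (φ ψ : Fml V) (c : Nat), VarVariant φ ψ →
    (Fml.box (JTerm.jconst c) ∅ φ ∈ CS ↔ Fml.box (JTerm.jconst c) ∅ ψ ∈ CS)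

/-- The extension `CS(V)` of a basic constant specification to the language with
witness variables: justified axioms with some free basic variables replaced by
distinct witness variables. -/
def CSV (CS : Set FmlB) : Set FmlW :=
  {χ | ∃ (c : Nat) (φ : FmlB) (ρ : (Nat ⊕ Nat) → (Nat ⊕ Nat)),
    Fml.box (JTerm.jconst c) ∅ φ ∈ CS ∧
    Function.Injective ρ ∧
    (∀ m : Nat, ρ (Sum.inr m) = Sum.inr m) ∧
    (∀ n : Nat, ρ (Sum.inl n) = Sum.inl n ∨ ∃ m : Nat, ρ (Sum.inl n) = Sum.inr m) ∧
    χ = Fml.box (JTerm.jconst c) ∅ (Fml.renameFree ρ (liftB φ))}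

/-- `Γ^#`. -/
def sharp (Γ : Set FmlW) : Set FmlW :=
  {χ | ∃ (t : JTerm) (X : Finset (Nat ⊕ Nat)) (φ : FmlW),
    Fml.box t X φ ∈ Γ ∧ (Fml.box t X φ : FmlW).fbv = ∅ ∧ X = φ.wvars ∧ χ = φ.close}

/-! ### Templates -/

inductive Tmpl : Type
  | pvar : Nat → Tmpl
  | neg : Tmpl → Tmpl
  | orr : Tmpl → Tmpl → Tmpl
  | andd : Tmpl → Tmpl → Tmpl
  | box : Tmpl → Tmpl

namespace Tmpl

def letters : Tmpl → Multiset Nat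
  | pvar i => {i}
  | neg G => G.letters
  | orr G H => G.letters + H.letters
  | andd G H => G.letters + H.letters
  | box G => G.letters

/-- No propositional letter occurs more than once. -/
def IsTemplate (F : Tmpl) : Prop := F.letters.Nodup

def Positive : Tmpl → Prop
  | pvar _ => True
  | neg _ => False
  | orr G H => G.Positive ∧ H.Positive
  | andd G H => G.Positive ∧ H.Positive
  | box G => G.Positive

def Disjunctive : Tmpl → Prop
  | pvar _ => True
  | neg _ => False
  | orr G H => G.Disjunctive ∧ H.Disjunctive
  | andd _ _ => False
  | box G => G.Disjunctive

end Tmpl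

/-- The instantiation set `⟦F(φ⃗)⟧`, where the valuation `v` gives the Henkin formula
substituted for each propositional letter. -/
inductive Inst (v : Nat → FmlW) : Tmpl → FmlW → Prop
  | pvar (i : Nat) : Inst v (Tmpl.pvar i) (v i)
  | neg {G : Tmpl} {ψ : FmlW} : Inst v G ψ → Inst v (Tmpl.neg G) ψ.neg
  | orr {G H : Tmpl} {ψ θ : FmlW} :
      Inst v G ψ → Inst v H θ → Inst v (Tmpl.orr G H) (ψ.orr θ)
  | andd {G H : Tmpl} {ψ θ : FmlW} :
      Inst v G ψ → Inst v H θ → Inst v (Tmpl.andd G H) (ψ.andd θ)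
  | box {G : Tmpl} {ψ : FmlW} (t : JTerm) :
      Inst v G ψ → Inst v (Tmpl.box G) (Fml.box t ψ.wvars ψ)

/-- The set of negations of members of `⟦F(φ⃗)⟧`. -/
def NegInst (v : Nat → FmlW) (F : Tmpl) : Set FmlW :=
  {χ | ∃ ψ : FmlW, Inst v F ψ ∧ χ = ψ.neg}

/-- `Δ` admits instantiation (relative to the basic constant specification `CS`). -/
def AdmitsInst (CS : Set FmlB) (Δ : Set FmlW) : Prop :=
  ∀ F : Tmpl, F.IsTemplate → F.Disjunctive →
    ∀ (v : Nat → FmlW) (q x : Nat) (φ : FmlW),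
      Consistent Logic.folpb (CSV CS)
        (Δ ∪ NegInst (Function.update v q (Fml.all x φ)) F) →
      ∃ a : Nat,
        Consistent Logic.folpb (CSV CS)
          (Δ ∪ NegInst (Function.update v q (φ.subst (Sum.inl x) (Sum.inr a))) F)

/-! ### Fitting models -/

/-- A Fitting model for FOLPb with constant domain `D`. -/
structure FModel (D : Type) [DecidableEq D] where
  W : Type
  nonempty : Nonempty W
  R : W → W → Prop
  refl : ∀ w, R w w
  trans : ∀ {u v w}, R u v → R v w → R u w
  I : Nat → W → List D → Prop
  E : JTerm → Fml D → Set W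
  condApp : ∀ (t s : JTerm) (φ ψ : Fml D), E t (φ.imp ψ) ∩ E s φ ⊆ E (t.app s) ψ
  condPlus : ∀ (t s : JTerm) (φ : Fml D), E t φ ∪ E s φ ⊆ E (t.plus s) φ
  condBang : ∀ (t : JTerm) (φ : Fml D) (X : Finset (Nat ⊕ D)),
    (∀ x ∈ X, x.isRight = true) → φ.wvars ⊆ X →
    E t φ ⊆ E t.bang (Fml.box t X φ)
  condClosure : ∀ (t : JTerm) (φ : Fml D) {w w'},
    w ∈ E t φ → R w w' → w' ∈ E t φ
  condInst : ∀ (t : JTerm) (φ : Fml D) (x : Nat) (a : D) {w},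
    w ∈ E t φ → w ∈ E t (φ.subst (Sum.inl x) (Sum.inr a))
  condGen : ∀ (t : JTerm) (φ : Fml D) (x : Nat), E t φ ⊆ E (t.gen x) (Fml.all x φ)
  condB : ∀ (t : JTerm) (φ : Fml D) (y : Nat) {w},
    (∀ a : D, w ∈ E t (φ.subst (Sum.inl y) (Sum.inr a))) →
    w ∈ E t.bb (Fml.all y φ)

/-- Truth of a (closed) `D`-formula at a world. -/
def Truth {D : Type} [DecidableEq D] (M : FModel D) : M.W → Fml D → Prop
  | w, .atom P l => ∃ ds : List D, l = ds.map Sum.inr ∧ M.I P w ds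
  | _, .bot => False
  | w, .imp φ ψ => Truth M w φ → Truth M w ψ
  | w, .all x φ => ∀ a : D, Truth M w (φ.subst (Sum.inl x) (Sum.inr a))
  | w, .box t _ φ => w ∈ M.E t φ ∧
      ∀ w', M.R w w' → ∀ σ : Nat → Nat ⊕ D, (∀ n, ∃ a : D, σ n = Sum.inr a) →
        Truth M w' (φ.instAll σ)
  termination_by _ φ => φ.size
  decreasing_by
    all_goals simp [Fml.size, Fml.size_subst, Fml.size_instAll]
    all_goals omega

/-- A basic-language formula as a `D`-formula. -/
def toD {D : Type} [DecidableEq D] : FmlB → Fml D := Fml.vmap fun e => e.elim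

/-- Validity in a model: the universal closure is true at every world. -/
def Valid {D : Type} [DecidableEq D] (M : FModel D) (φ : FmlB) : Prop :=
  ∀ w : M.W, Truth M w (toD φ.close)

/-- The model meets the constant specification `CS`. -/
def Meets {D : Type} [DecidableEq D] (M : FModel D) (CS : Set FmlB) : Prop :=
  ∀ (c : Nat) (φ : FmlB), Fml.box (JTerm.jconst c) ∅ φ ∈ CS →
    ∀ w : M.W, w ∈ M.E (JTerm.jconst c) (toD φ)

/-- Monotonicity of the subscript set, via repeated use of axiom A3. -/
theorem box_union_mono {V : Type} [DecidableEq V] {L : Logic} {CS Γ : Set (Fml V)}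
    {t : JTerm} {Y : Finset (Nat ⊕ V)} {ψ : Fml V} (S : Finset (Nat ⊕ V))
    (h : Deriv L CS Γ (Fml.box t Y ψ)) :
    Deriv L CS Γ (Fml.box t (Y ∪ S) ψ) := by
  classical
  induction S using Finset.induction_on with
  | empty => simpa using h
  | insert a S ha ih =>
      have : Y ∪ insert a S = insert a (Y ∪ S) := by
        ext x; simp [Finset.mem_insert, Finset.mem_union, or_assoc, or_left_comm]
      rw [this]
      exact Deriv.mp (Deriv.ax (IsAxiom.a3 L t (Y ∪ S) a ψ)) ih

theorem box_subset_mono {V : Type} [DecidableEq V] {L : Logic} {CS Γ : Set (Fml V)}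
    {t : JTerm} {Y Z : Finset (Nat ⊕ V)} {ψ : Fml V} (hYZ : Y ⊆ Z)
    (h : Deriv L CS Γ (Fml.box t Y ψ)) :
    Deriv L CS Γ (Fml.box t Z ψ) := by
  have := box_union_mono (L := L) (CS := CS) (Γ := Γ) Z h
  rwa [Finset.union_eq_right.mpr hYZ] at this

/-- **Internalization** for FOLPb: if `p₀:_{X₀}φ₀, …, p_k:_{X_k}φ_k ⊢_CS ψ` with `CS`
axiomatically appropriate, then for `X = X₀ ∪ … ∪ X_k` there is a justification term `t`
with `p₀:_{X₀}φ₀, …, p_k:_{X_k}φ_k ⊢_CS t:_X ψ`. -/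
theorem internalization (CS : Set FmlB) (hCS : IsCS Logic.folpb CS)
    (hApp : AxAppropriate Logic.folpb CS)
    (k : Nat) (p : Fin (k + 1) → Nat) (Xs : Fin (k + 1) → Finset (Nat ⊕ Empty))
    (φs : Fin (k + 1) → FmlB) (ψ : FmlB)
    (h : Deriv Logic.folpb CS
      {χ | ∃ i : Fin (k + 1), χ = Fml.box (JTerm.jvar (p i)) (Xs i) (φs i)} ψ) :
    ∃ t : JTerm,
      Deriv Logic.folpb CS
        {χ | ∃ i : Fin (k + 1), χ = Fml.box (JTerm.jvar (p i)) (Xs i) (φs i)}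
        (Fml.box t (Finset.univ.biUnion Xs) ψ) := by
  classical
  set Γ : Set FmlB :=
    {χ | ∃ i : Fin (k + 1), χ = Fml.box (JTerm.jvar (p i)) (Xs i) (φs i)} with hΓ
  set X : Finset (Nat ⊕ Empty) := Finset.univ.biUnion Xs with hX
  induction h with
  | ax hax =>
      rename_i φ
      obtain ⟨c, hc⟩ := hApp φ hax
      exact ⟨JTerm.jconst c, box_subset_mono (Finset.empty_subset X) (Deriv.cs hc)⟩
  | cs hcs =>
      rename_i χ
      obtain ⟨c, φ, rfl, _⟩ := hCS χ hcs
      refine ⟨(JTerm.jconst c).bang, box_subset_mono (Finset.empty_subset X) ?_⟩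
      exact Deriv.mp (Deriv.ax (IsAxiom.b4 _ _ _ _)) (Deriv.cs hcs)
  | hyp hmem =>
      rename_i χ
      obtain ⟨i, rfl⟩ := hmem
      refine ⟨(JTerm.jvar (p i)).bang, box_subset_mono (Y := Xs i) ?_ ?_⟩
      · intro a ha
        exact Finset.mem_biUnion.mpr ⟨i, Finset.mem_univ i, ha⟩
      · exact Deriv.mp (Deriv.ax (IsAxiom.b4 _ _ _ _)) (Deriv.hyp ⟨i, rfl⟩)
  | mp h1 h2 ih1 ih2 =>
      obtain ⟨t1, ht1⟩ := ih1
      obtain ⟨t2, ht2⟩ := ih2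
      exact ⟨t1.app t2, Deriv.mp (Deriv.mp (Deriv.ax (IsAxiom.b2 _ _ _ _ _ _)) ht1) ht2⟩
  | genR h1 hside ih =>
      rename_i φ x
      obtain ⟨t, ht⟩ := ih
      have hx : Sum.inl x ∉ X := by
        intro hmem
        rw [hX] at hmem
        obtain ⟨i, -, hi⟩ := Finset.mem_biUnion.mp hmem
        exact hside _ ⟨i, rfl⟩ (by simpa [Fml.fv] using hi)
      exact ⟨t.gen x, Deriv.mp (Deriv.ax (IsAxiom.b5 _ _ _ _ _ hx)) ht⟩
end

section
/- Validity of the justification Barcan axiom: Every instance of the scheme ∀y t:_{X∪{y}}φ(y) → b(t):_X ∀y φ(y) is valid in every Fitting model for FOLPb meeting a constant specification CS. -/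
section BarcanAux

namespace Fml

variable {V : Type} [DecidableEq V]

theorem mem_image_ite_of_ne (X : Finset (Nat ⊕ V)) (x e w : Nat ⊕ V)
    (h1 : w ≠ x) (h2 : w ≠ e) :
    w ∈ X.image (fun v => if v = x then e else v) ↔ w ∈ X := by
  simp only [Finset.mem_image]
  constructor
  · rintro ⟨v, hv, hve⟩
    by_cases hvx : v = x
    · simp [hvx] at hve; exact absurd hve.symm h2
    · simp [hvx] at hve; rwa [hve] at hv
  · intro hw; exact ⟨w, hw, if_neg h1⟩

theorem not_mem_image_ite (X : Finset (Nat ⊕ V)) (x e : Nat ⊕ V) (h : e ≠ x) :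
    x ∉ X.image (fun v => if v = x then e else v) := by
  simp only [Finset.mem_image, not_exists]
  rintro v ⟨hv, hve⟩
  by_cases hvx : v = x
  · simp [hvx] at hve; exact h hve
  · rw [if_neg hvx] at hve; exact hvx hve

/-- Lemma B: substituting a domain element then instantiating equals instantiating
with an updated substitution. -/
theorem subst_instAll (y : Nat) (a : V) :
    ∀ (ψ : Fml V) (σ : Nat → Nat ⊕ V),
      (ψ.subst (Sum.inl y) (Sum.inr a)).instAll σ
        = ψ.instAll (Function.update σ y (Sum.inr a)) := by
  intro ψ
  induction ψ with
  | atom P l =>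
      intro σ
      simp only [subst, instAll, List.map_map]
      congr 1
      apply List.map_congr_left
      intro v _
      match v with
      | Sum.inl n =>
          by_cases hn : n = y
          · subst hn; simp [Function.update]
          · simp [Function.update, hn, Sum.inl.injEq]
      | Sum.inr d => simp
  | bot => intro σ; simp [subst, instAll]
  | imp φ χ ihφ ihχ => intro σ; simp [subst, instAll, ihφ, ihχ]
  | all x φ ih =>
      intro σ
      by_cases hxy : x = y
      · subst hxy
        simp only [subst, if_pos rfl, instAll, ↓reduceIte]
        congr 1
        rw [Function.update_idem]
      · have hne : (Sum.inl y : Nat ⊕ V) ≠ Sum.inl x := by simp [Ne.symm hxy]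
        simp only [subst, if_neg hne, instAll, ih]
        congr 1
        rw [Function.update_comm hxy]
  | box t X φ ih =>
      intro σ
      by_cases hX : Sum.inl y ∈ X
      · simp only [subst, if_pos hX, instAll, ih, Finset.image_image]
        congr 1
        · apply Finset.image_congr
          intro v _
          match v with
          | Sum.inl n =>
              by_cases hn : n = y
              · subst hn; simp [Function.update]
              · simp [Function.update, hn, Sum.inl.injEq]
          | Sum.inr d => simp
        · have hfun : (Function.update (fun n =>
              if Sum.inl n ∈ X.image (fun v => if v = (Sum.inl y : Nat ⊕ V) then Sum.inr a else v)
              then σ n else Sum.inl n) y (Sum.inr a))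
            = (fun n => if Sum.inl n ∈ X then Function.update σ y (Sum.inr a) n else Sum.inl n) := by
            funext n
            by_cases hn : n = y
            · subst hn
              simp [Function.update, hX]
            · rw [Function.update_of_ne hn, Function.update_of_ne hn]
              simp only [mem_image_ite_of_ne X (Sum.inl y) (Sum.inr a) (Sum.inl n)
                (by simp [hn]) (by simp)]
          rw [hfun]
      · simp only [subst, if_neg hX, instAll]
        congr 1
        · apply Finset.image_congr
          intro v hv
          match v with
          | Sum.inl n =>
              have hn : n ≠ y := fun h => hX (h ▸ hv)
              simp [Function.update, hn]
          | Sum.inr d => simp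
        · have hfun : (fun n => if Sum.inl n ∈ X then σ n else Sum.inl n)
            = (fun n => if Sum.inl n ∈ X then Function.update σ y (Sum.inr a) n else Sum.inl n) := by
            funext n
            by_cases hnX : Sum.inl n ∈ X
            · have hn : n ≠ y := fun h => hX (h ▸ hnX)
              simp [hnX, Function.update, hn]
            · simp [hnX]
          rw [hfun]

/-- Lemma A: instantiating everything but `y`, then substituting a domain
element for `y`. -/
theorem instAll_subst (y : Nat) (a : V) :
    ∀ (ψ : Fml V) (σ : Nat → Nat ⊕ V), (∀ n, n ≠ y → σ n ≠ Sum.inl y) →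
      (ψ.instAll (Function.update σ y (Sum.inl y))).subst (Sum.inl y) (Sum.inr a)
        = ψ.instAll (Function.update σ y (Sum.inr a)) := by
  intro ψ
  induction ψ with
  | atom P l =>
      intro σ hσ
      simp only [instAll, subst, List.map_map]
      congr 1
      apply List.map_congr_left
      intro v _
      match v with
      | Sum.inl n =>
          by_cases hn : n = y
          · subst hn; simp [Function.update]
          · simp [Function.update, hn, hσ n hn]
      | Sum.inr d => simp
  | bot => intro σ hσ; simp [instAll, subst]
  | imp φ χ ihφ ihχ => intro σ hσ; simp [instAll, subst, ihφ σ hσ, ihχ σ hσ]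
  | all x φ ih =>
      intro σ hσ
      by_cases hxy : x = y
      · subst hxy
        simp [instAll, subst, Function.update_idem]
      · have hyx : (Sum.inl y : Nat ⊕ V) ≠ Sum.inl x := by simp [Ne.symm hxy]
        simp only [instAll, subst, if_neg hyx]
        congr 1
        have hcomm : Function.update (Function.update σ y (Sum.inl y)) x (Sum.inl x)
            = Function.update (Function.update σ x (Sum.inl x)) y (Sum.inl y) :=
          Function.update_comm (fun h => hxy (h.symm)) _ _ _
        rw [hcomm, ih (Function.update σ x (Sum.inl x))
          (by intro n hn
              by_cases hnx : n = x
              · subst hnx; simp [Function.update]; intro h; exact hxy h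
              · rw [Function.update_of_ne hnx]; exact hσ n hn)]
        have hfun : Function.update (Function.update σ x (Sum.inl x)) y (Sum.inr a)
            = Function.update (Function.update σ y (Sum.inr a)) x (Sum.inl x) :=
          Function.update_comm hxy _ _ _
        rw [hfun]
  | box t X φ ih =>
      intro σ hσ
      by_cases hX : Sum.inl y ∈ X
      · have hmem : (Sum.inl y : Nat ⊕ V) ∈ X.image fun v =>
            match v with | Sum.inl n => Function.update σ y (Sum.inl y) n | w => w := by
          refine Finset.mem_image.2 ⟨Sum.inl y, hX, ?_⟩
          simp [Function.update]
        simp only [instAll, subst, if_pos hmem, Finset.image_image]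
        congr 1
        · apply Finset.image_congr
          intro v _
          match v with
          | Sum.inl n =>
              by_cases hn : n = y
              · subst hn; simp [Function.update]
              · simp [Function.update, hn, hσ n hn]
          | Sum.inr d => simp
        · have h1 : (fun n => if (Sum.inl n : Nat ⊕ V) ∈ X then Function.update σ y (Sum.inl y) n
              else Sum.inl n) = Function.update (fun n =>
                if (Sum.inl n : Nat ⊕ V) ∈ X then σ n else Sum.inl n) y (Sum.inl y) := by
            funext n
            by_cases hn : n = y
            · subst hn; simp [Function.update, hX]
            · rw [Function.update_of_ne hn, Function.update_of_ne hn]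
          rw [h1, ih (fun n => if (Sum.inl n : Nat ⊕ V) ∈ X then σ n else Sum.inl n) (by
            intro n hn
            by_cases hnX : (Sum.inl n : Nat ⊕ V) ∈ X
            · simp only [if_pos hnX]; exact hσ n hn
            · simp only [if_neg hnX]; simp [hn])]
          have h2 : Function.update (fun n =>
              if (Sum.inl n : Nat ⊕ V) ∈ X then σ n else Sum.inl n) y (Sum.inr a)
            = (fun n => if (Sum.inl n : Nat ⊕ V) ∈ X
                then Function.update σ y (Sum.inr a) n else Sum.inl n) := by
            funext n
            by_cases hn : n = y
            · subst hn; simp [Function.update, hX]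
            · rw [Function.update_of_ne hn, Function.update_of_ne hn]
          rw [h2]
      · have hnmem : (Sum.inl y : Nat ⊕ V) ∉ X.image fun v =>
            match v with | Sum.inl n => Function.update σ y (Sum.inl y) n | w => w := by
          simp only [Finset.mem_image, not_exists]
          rintro v ⟨hv, h⟩
          match v with
          | Sum.inl n =>
              have hn : n ≠ y := fun hh => hX (hh ▸ hv)
              have h' : Function.update σ y (Sum.inl y) n = Sum.inl y := h
              rw [Function.update_of_ne hn] at h'
              exact hσ n hn h'
          | Sum.inr d => exact Sum.inr_ne_inl h
        simp only [instAll, subst, if_neg hnmem]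
        congr 1
        · apply Finset.image_congr
          intro v hv
          match v with
          | Sum.inl n =>
              have hn : n ≠ y := fun hh => hX (hh ▸ hv)
              simp [Function.update, hn]
          | Sum.inr d => simp
        · have hfun : (fun n => if (Sum.inl n : Nat ⊕ V) ∈ X
              then Function.update σ y (Sum.inl y) n else Sum.inl n)
            = (fun n => if (Sum.inl n : Nat ⊕ V) ∈ X
                then Function.update σ y (Sum.inr a) n else Sum.inl n) := by
            funext n
            by_cases hnX : (Sum.inl n : Nat ⊕ V) ∈ X
            · have hn : n ≠ y := fun hh => hX (hh ▸ hnX)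
              simp [hnX, Function.update, hn]
            · simp [hnX]
          rw [hfun]

theorem subst_foldr (x : Nat) (e : Nat ⊕ V) :
    ∀ (l : List Nat) (χ : Fml V),
      (l.foldr Fml.all χ).subst (Sum.inl x) e
        = l.foldr Fml.all (if x ∈ l then χ else χ.subst (Sum.inl x) e) := by
  intro l
  induction l with
  | nil => intro χ; simp
  | cons z l ih =>
      intro χ
      by_cases hz : x = z
      · subst hz
        simp [subst, List.foldr]
      · simp only [List.foldr, subst, Sum.inl.injEq, if_neg hz, ih]
        simp [List.mem_cons, hz]

theorem vmap_foldr {V' : Type} [DecidableEq V'] (f : V → V') :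
    ∀ (l : List Nat) (χ : Fml V),
      (l.foldr Fml.all χ).vmap f = l.foldr Fml.all (χ.vmap f) := by
  intro l
  induction l with
  | nil => intro χ; rfl
  | cons z l ih => intro χ; simp [List.foldr, vmap, ih]

end Fml

/-- Formulas of Barcan shape. -/
def BarcanShape {D : Type} [DecidableEq D] (θ : Fml D) : Prop :=
  ∃ (ψ : Fml D) (t : JTerm) (X : Finset (Nat ⊕ D)) (y : Nat),
    Sum.inl y ∉ X ∧
    θ = (Fml.all y (Fml.box t (insert (Sum.inl y) X) ψ)).imp
          (Fml.box t.bb X (Fml.all y ψ))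

theorem barcanShape_subst {D : Type} [DecidableEq D] {θ : Fml D}
    (h : BarcanShape θ) (x : Nat) (a : D) :
    BarcanShape (θ.subst (Sum.inl x) (Sum.inr a)) := by
  obtain ⟨ψ, t, X, y, hy, rfl⟩ := h
  by_cases hxy : x = y
  · subst hxy
    have heq : ((Fml.all x (Fml.box t (insert (Sum.inl x) X) ψ)).imp
          (Fml.box t.bb X (Fml.all x ψ))).subst (Sum.inl x) (Sum.inr a)
        = (Fml.all x (Fml.box t (insert (Sum.inl x) X) ψ)).imp
          (Fml.box t.bb X (Fml.all x ψ)) := by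
      simp only [Fml.subst, if_pos rfl, if_neg hy, eq_self_iff_true, if_true]
    rw [heq]
    exact ⟨ψ, t, X, x, hy, rfl⟩
  · have hxyne : (Sum.inl x : Nat ⊕ D) ≠ Sum.inl y := by simp [hxy]
    by_cases hX : Sum.inl x ∈ X
    · have h1 : (Sum.inl x : Nat ⊕ D) ∈ insert (Sum.inl y) X := Finset.mem_insert_of_mem hX
      have h2 : (Sum.inl y : Nat ⊕ D) ≠ Sum.inl x := Ne.symm hxyne
      refine ⟨ψ.subst (Sum.inl x) (Sum.inr a), t,
        X.image (fun v => if v = Sum.inl x then Sum.inr a else v), y, ?_, ?_⟩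
      · rw [Fml.mem_image_ite_of_ne X (Sum.inl x) (Sum.inr a) (Sum.inl y) h2 (by simp)]
        exact hy
      · simp only [Fml.subst, if_neg hxyne, if_pos h1, if_pos hX, Finset.image_insert,
          if_neg h2]
    · have h1 : (Sum.inl x : Nat ⊕ D) ∉ insert (Sum.inl y) X := by
        simp [Finset.mem_insert, hxyne, hX]
      refine ⟨ψ, t, X, y, hy, ?_⟩
      simp only [Fml.subst, if_neg hxyne, if_neg h1, if_neg hX]

theorem barcanShape_truth {D : Type} [DecidableEq D] (M : FModel D) {θ : Fml D}
    (h : BarcanShape θ) (w : M.W) : Truth M w θ := by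
  obtain ⟨ψ, t, X, y, hy, rfl⟩ := h
  simp only [Truth]
  intro hAll
  have hsub : ∀ a : D,
      Truth M w (Fml.box t ((insert (Sum.inl y) X).image
        (fun v => if v = Sum.inl y then Sum.inr a else v))
        (ψ.subst (Sum.inl y) (Sum.inr a))) := by
    intro a
    have h0 := hAll a
    simp only [Fml.subst, if_pos (Finset.mem_insert_self (Sum.inl y : Nat ⊕ D) X)] at h0
    exact h0
  simp only [Truth] at hsub
  constructor
  · exact M.condB t ψ y (fun a => (hsub a).1)
  · intro w' hR σ hσ
    simp only [Fml.instAll, Truth]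
    intro a
    have hcond : ∀ n, n ≠ y → σ n ≠ Sum.inl y := by
      intro n _ hcontra
      obtain ⟨b, hb⟩ := hσ n
      rw [hb] at hcontra
      exact Sum.inr_ne_inl hcontra
    rw [Fml.instAll_subst y a ψ σ hcond, ← Fml.subst_instAll y a ψ σ]
    exact (hsub a).2 w' hR σ hσ

theorem truth_foldr {D : Type} [DecidableEq D] (M : FModel D) (l : List Nat) :
    ∀ (χ : Fml D), BarcanShape χ → ∀ w, Truth M w (l.foldr Fml.all χ) := by
  induction l with
  | nil => intro χ h w; exact barcanShape_truth M h w
  | cons z l ih =>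
      intro χ h w
      simp only [List.foldr, Truth]
      intro a
      rw [Fml.subst_foldr]
      split_ifs with hz
      · exact ih χ h w
      · exact ih _ (barcanShape_subst h z a) w

end BarcanAux

/-- **Validity of the justification Barcan axiom**: every instance of
`∀y t:_{X∪{y}}φ(y) → b(t):_X ∀y φ(y)` is valid in every Fitting model for FOLPb
meeting a constant specification `CS`. -/
theorem barcan_axiom_valid (CS : Set FmlB) (hCS : IsCS Logic.folpb CS)
    (D : Type) [DecidableEq D] [Nonempty D] (M : FModel D) (hM : Meets M CS)
    (t : JTerm) (X : Finset (Nat ⊕ Empty)) (y : Nat) (hy : Sum.inl y ∉ X)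
    (φ : FmlB) :
    Valid M ((Fml.all y (Fml.box t (insert (Sum.inl y) X) φ)).imp
      (Fml.box t.bb X (Fml.all y φ))) := by
  intro w
  unfold toD Fml.close
  rw [Fml.vmap_foldr]
  apply truth_foldr
  refine ⟨Fml.vmap (fun e => e.elim) φ, t,
    X.image (Sum.map id fun e => e.elim), y, ?_, ?_⟩
  · simp only [Finset.mem_image, not_exists]
    rintro v ⟨hv, hve⟩
    match v with
    | Sum.inl n =>
        have : n = y := by simpa [Sum.map] using hve
        exact hy (this ▸ hv)
    | Sum.inr e => exact e.elim
  · simp only [Fml.vmap, Finset.image_insert]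
    rfl
end

section
/- Conservativity of the witness-variable extension: Let CS be a variant-closed constant specification for the basic language of FOLPb and CS(V) its extension to the language with witness variables. For every formula φ of the basic language (without witness variables), if ⊢_{CS(V)} φ then ⊢_CS φ. -/
/-! ### Auxiliary development for conservativity -/

namespace Conserv

open Fml

/-- Variable translation: witness variables become (fresh) basic variables. -/
def gf (f : Nat → Nat) : Nat ⊕ Nat → Nat ⊕ Empty
  | Sum.inl n => Sum.inl n
  | Sum.inr m => Sum.inl (f m)

/-- Formula translation from the witness language to the basic language. -/
def w2b (f : Nat → Nat) : FmlW → FmlB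
  | .atom P l => .atom P (l.map (gf f))
  | .bot => .bot
  | .imp φ ψ => .imp (w2b f φ) (w2b f ψ)
  | .all x φ => .all x (w2b f φ)
  | .box t X φ => .box t (X.image (gf f)) (w2b f φ)

/-- `f` is injective and its range avoids the basic variables recorded in `T`. -/
def Good (f : Nat → Nat) (T : Finset (Nat ⊕ Nat)) : Prop :=
  Function.Injective f ∧ ∀ m, Sum.inl (f m) ∉ T

lemma Good.mono {f : Nat → Nat} {S T : Finset (Nat ⊕ Nat)} (h : Good f T) (hs : S ⊆ T) :
    Good f S := ⟨h.1, fun m hm => h.2 m (hs hm)⟩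

lemma Good.inj {f : Nat → Nat} {T : Finset (Nat ⊕ Nat)} (h : Good f T)
    {v w : Nat ⊕ Nat} (hv : v ∈ T) (hw : w ∈ T) (he : gf f v = gf f w) : v = w := by
  cases v with
  | inl n =>
    cases w with
    | inl n' => simpa [gf] using he
    | inr m => simp only [gf, Sum.inl.injEq] at he; exact absurd (he ▸ hv) (h.2 m)
  | inr m =>
    cases w with
    | inl n' => simp only [gf, Sum.inl.injEq] at he; exact absurd (he ▸ hw) (h.2 m)
    | inr m' => simp only [gf, Sum.inl.injEq] at he; exact congrArg _ (h.1 he)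

lemma fv_subset_allVars {V : Type} [DecidableEq V] (φ : Fml V) : φ.fv ⊆ φ.allVars := by
  induction φ with
  | atom P l => simp [Fml.fv, Fml.allVars]
  | bot => simp [Fml.fv, Fml.allVars]
  | imp φ ψ ih1 ih2 =>
    simp only [Fml.fv, Fml.allVars]
    exact Finset.union_subset_union ih1 ih2
  | all x φ ih =>
    simp only [Fml.fv, Fml.allVars]
    exact (Finset.sdiff_subset).trans (ih.trans (Finset.subset_insert _ _))
  | box t X φ ih =>
    simp only [Fml.fv, Fml.allVars]
    exact (Finset.subset_union_left).trans Finset.subset_union_left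

lemma fv_w2b {f : Nat → Nat} {T : Finset (Nat ⊕ Nat)} (h : Good f T) :
    ∀ φ : FmlW, φ.allVars ⊆ T → (w2b f φ).fv = φ.fv.image (gf f) := by
  intro φ
  induction φ with
  | atom P l =>
    intro _
    simp only [w2b, Fml.fv]
    ext u
    simp
  | bot => intro _; simp [w2b, Fml.fv]
  | imp φ ψ ih1 ih2 =>
    intro hT
    simp only [Fml.allVars, Finset.union_subset_iff] at hT
    simp [w2b, Fml.fv, ih1 hT.1, ih2 hT.2, Finset.image_union]
  | all x φ ih =>
    intro hT
    simp only [Fml.allVars, Finset.insert_subset_iff] at hT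
    simp only [w2b, Fml.fv, ih hT.2]
    ext u
    simp only [Finset.mem_sdiff, Finset.mem_image, Finset.mem_singleton]
    constructor
    · rintro ⟨⟨v, hv, rfl⟩, hne⟩
      refine ⟨v, ⟨hv, ?_⟩, rfl⟩
      rintro rfl; exact hne rfl
    · rintro ⟨v, ⟨hv, hne⟩, rfl⟩
      refine ⟨⟨v, hv, rfl⟩, ?_⟩
      intro hgf
      exact hne (h.inj (hT.2 (fv_subset_allVars φ hv)) hT.1 (by simpa [gf] using hgf))
  | box t X φ ih => intro _; simp [w2b, Fml.fv]

lemma subst_w2b {f : Nat → Nat} {T : Finset (Nat ⊕ Nat)} (h : Good f T)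
    {x : Nat ⊕ Nat} (hx : x ∈ T) (e : Nat ⊕ Nat) :
    ∀ φ : FmlW, φ.allVars ⊆ T →
      w2b f (φ.subst x e) = (w2b f φ).subst (gf f x) (gf f e) := by
  intro φ
  induction φ with
  | atom P l =>
    intro hT
    simp only [Fml.allVars] at hT
    simp only [Fml.subst, w2b, List.map_map]
    congr 1
    apply List.map_congr_left
    intro v hv
    by_cases hvx : v = x
    · simp [hvx, Function.comp]
    · have : gf f v ≠ gf f x := fun hc =>
        hvx (h.inj (hT (by simp [hv])) hx hc)
      simp [Function.comp, hvx, this]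
  | bot => intro _; simp [Fml.subst, w2b]
  | imp φ ψ ih1 ih2 =>
    intro hT
    simp only [Fml.allVars, Finset.union_subset_iff] at hT
    simp [Fml.subst, w2b, ih1 hT.1, ih2 hT.2]
  | all y φ ih =>
    intro hT
    simp only [Fml.allVars, Finset.insert_subset_iff] at hT
    by_cases hxy : x = Sum.inl y
    · simp [Fml.subst, hxy, w2b, gf]
    · have : gf f x ≠ Sum.inl y := by
        intro hc
        exact hxy (h.inj hx hT.1 (by simpa [gf] using hc))
      simp [Fml.subst, hxy, w2b, this, ih hT.2]
  | box t X φ ih =>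
    intro hT
    simp only [Fml.allVars, Finset.union_subset_iff] at hT
    have hXT : X ⊆ T := hT.1.1
    by_cases hxX : x ∈ X
    · have hgx : gf f x ∈ X.image (gf f) := Finset.mem_image_of_mem _ hxX
      simp only [Fml.subst, hxX, if_true, w2b, hgx, if_true]
      congr 1
      · rw [Finset.image_image, Finset.image_image]
        apply Finset.image_congr
        intro v hv
        by_cases hvx : v = x
        · simp [hvx, Function.comp]
        · have : gf f v ≠ gf f x := fun hc => hvx (h.inj (hXT hv) hx hc)
          simp [Function.comp, hvx, this]
      · exact ih hT.2
    · have hgx : gf f x ∉ X.image (gf f) := by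
        simp only [Finset.mem_image, not_exists, not_and]
        intro v hv hc
        exact hxX (h.inj (hXT hv) hx hc ▸ hv)
      simp [Fml.subst, hxX, w2b, hgx]

lemma freeFor_w2b {f : Nat → Nat} {T : Finset (Nat ⊕ Nat)} (h : Good f T)
    {x e : Nat ⊕ Nat} (hx : x ∈ T) (he : e ∈ T) :
    ∀ φ : FmlW, φ.allVars ⊆ T → φ.freeFor e x →
      (w2b f φ).freeFor (gf f e) (gf f x) := by
  intro φ
  induction φ with
  | atom P l => intro _ _; trivial
  | bot => intro _ _; trivial
  | imp φ ψ ih1 ih2 =>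
    intro hT hff
    simp only [Fml.allVars, Finset.union_subset_iff] at hT
    exact ⟨ih1 hT.1 hff.1, ih2 hT.2 hff.2⟩
  | all y φ ih =>
    intro hT hff
    simp only [Fml.allVars, Finset.insert_subset_iff] at hT
    rcases hff with hnf | ⟨hne, hff⟩
    · left
      simp only [Fml.fv] at hnf ⊢
      simp only [w2b, fv_w2b h φ hT.2]
      simp only [Finset.mem_sdiff, Finset.mem_singleton, not_and, not_not] at hnf ⊢
      intro hmem
      rcases Finset.mem_image.mp hmem with ⟨v, hv, hgv⟩
      have : v = x := h.inj (hT.2 (fv_subset_allVars φ hv)) hx hgv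
      subst this
      have := hnf hv
      subst this
      rfl
    · right
      refine ⟨?_, ih hT.2 hff⟩
      intro hc
      exact hne (h.inj he hT.1 (by simpa [gf] using hc))
  | box t X φ ih =>
    intro hT hff
    simp only [Fml.allVars, Finset.union_subset_iff] at hT
    refine ⟨ih hT.2 hff.1, ?_⟩
    intro hmem
    rw [fv_w2b h φ hT.2] at hmem
    rcases Finset.mem_image.mp hmem with ⟨v, hv, hgv⟩
    have : v = e := h.inj (hT.2 (fv_subset_allVars φ hv)) he hgv
    subst this
    exact Finset.mem_image_of_mem _ (hff.2 hv)

lemma notMem_fv_w2b {f : Nat → Nat} {T : Finset (Nat ⊕ Nat)} (h : Good f T)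
    {y : Nat ⊕ Nat} (hy : y ∈ T) {φ : FmlW} (hT : φ.allVars ⊆ T)
    (hnf : y ∉ φ.fv) : gf f y ∉ (w2b f φ).fv := by
  rw [fv_w2b h φ hT]
  intro hmem
  rcases Finset.mem_image.mp hmem with ⟨v, hv, hgv⟩
  exact hnf ((h.inj (hT (fv_subset_allVars φ hv)) hy hgv) ▸ hv)

lemma w2b_neg (f : Nat → Nat) (φ : FmlW) : w2b f φ.neg = (w2b f φ).neg := rfl

lemma isAxiom_w2b {φ : FmlW} (hax : IsAxiom Logic.folpb φ) :
    ∃ T : Finset (Nat ⊕ Nat), ∀ f, Good f T → IsAxiom Logic.folpb (w2b f φ) := by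
  cases hax with
  | a1k L φ ψ => exact ⟨∅, fun f _ => IsAxiom.a1k _ _ _⟩
  | a1s L φ ψ χ => exact ⟨∅, fun f _ => IsAxiom.a1s _ _ _ _⟩
  | a1dne L φ => exact ⟨∅, fun f _ => IsAxiom.a1dne _ _⟩
  | a1inst L x e φ hff =>
    refine ⟨insert e (insert (Sum.inl x) φ.allVars), fun f hg => ?_⟩
    have hx : (Sum.inl x : Nat ⊕ Nat) ∈ insert e (insert (Sum.inl x) φ.allVars) := by simp
    have he : e ∈ insert e (insert (Sum.inl x) φ.allVars) := by simp
    have hT : φ.allVars ⊆ insert e (insert (Sum.inl x) φ.allVars) := by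
      intro v hv; simp [hv]
    have := IsAxiom.a1inst (V := Empty) Logic.folpb x (gf f e) (w2b f φ)
      (by simpa [gf] using freeFor_w2b hg hx he φ hT hff)
    simpa [w2b, subst_w2b hg hx e φ hT, gf] using this
  | a1allImp L x φ ψ => exact ⟨∅, fun f _ => IsAxiom.a1allImp _ _ _ _⟩
  | a1vac L x φ hnf =>
    refine ⟨insert (Sum.inl x) φ.allVars, fun f hg => ?_⟩
    have hx : (Sum.inl x : Nat ⊕ Nat) ∈ insert (Sum.inl x) φ.allVars := by simp
    have hT : φ.allVars ⊆ insert (Sum.inl x) φ.allVars := Finset.subset_insert _ _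
    exact IsAxiom.a1vac _ _ _ (by simpa [gf] using notMem_fv_w2b hg hx hT hnf)
  | a2 L t X y φ hnf =>
    refine ⟨insert y (X ∪ φ.allVars), fun f hg => ?_⟩
    have hy : y ∈ insert y (X ∪ φ.allVars) := by simp
    have hT : φ.allVars ⊆ insert y (X ∪ φ.allVars) := by
      intro v hv; simp [hv]
    have := IsAxiom.a2 (V := Empty) Logic.folpb t (X.image (gf f)) (gf f y) (w2b f φ)
      (notMem_fv_w2b hg hy hT hnf)
    simpa [w2b, Finset.image_insert] using this
  | a3 L t X y φ =>
    refine ⟨∅, fun f _ => ?_⟩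
    have := IsAxiom.a3 (V := Empty) Logic.folpb t (X.image (gf f)) (gf f y) (w2b f φ)
    simpa [w2b, Finset.image_insert] using this
  | b1 L t X φ => exact ⟨∅, fun f _ => IsAxiom.b1 _ _ _ _⟩
  | b2 L t s X φ ψ => exact ⟨∅, fun f _ => IsAxiom.b2 _ _ _ _ _ _⟩
  | b3l L t s X φ => exact ⟨∅, fun f _ => IsAxiom.b3l _ _ _ _ _⟩
  | b3r L t s X φ => exact ⟨∅, fun f _ => IsAxiom.b3r _ _ _ _ _⟩
  | b4 L t X φ => exact ⟨∅, fun f _ => IsAxiom.b4 _ _ _ _⟩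
  | b5 L t X x φ hnx =>
    refine ⟨insert (Sum.inl x) X, fun f hg => ?_⟩
    refine IsAxiom.b5 _ _ _ _ _ ?_
    simp only [Finset.mem_image, not_exists, not_and]
    intro v hv hc
    have : v = Sum.inl x := hg.inj (by simp [hv]) (by simp) (by simpa [gf] using hc)
    exact hnx (this ▸ hv)
  | bb t X y φ hny =>
    refine ⟨insert (Sum.inl y) X, fun f hg => ?_⟩
    have hy : (Sum.inl y : Nat ⊕ Empty) ∉ X.image (gf f) := by
      simp only [Finset.mem_image, not_exists, not_and]
      intro v hv hc
      have : v = Sum.inl y := hg.inj (by simp [hv]) (by simp) (by simpa [gf] using hc)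
      exact hny (this ▸ hv)
    have := IsAxiom.bb (V := Empty) t (X.image (gf f)) y (w2b f φ) hy
    simpa [w2b, Finset.image_insert, gf] using this

lemma renameFree_congr {V : Type} [DecidableEq V] :
    ∀ (φ : Fml V) (ρ₁ ρ₂ : (Nat ⊕ V) → (Nat ⊕ V)),
      (∀ v ∈ φ.fv, ρ₁ v = ρ₂ v) → Fml.renameFree ρ₁ φ = Fml.renameFree ρ₂ φ := by
  intro φ
  induction φ with
  | atom P l =>
    intro ρ₁ ρ₂ hagree
    simp only [Fml.renameFree]
    congr 1
    apply List.map_congr_left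
    intro v hv
    exact hagree v (by simp [Fml.fv, hv])
  | bot => intro _ _ _; rfl
  | imp φ ψ ih1 ih2 =>
    intro ρ₁ ρ₂ hagree
    simp only [Fml.renameFree]
    rw [ih1 _ _ fun v hv => hagree v (by simp [Fml.fv, hv]),
        ih2 _ _ fun v hv => hagree v (by simp [Fml.fv, hv])]
  | all y φ ih =>
    intro ρ₁ ρ₂ hagree
    simp only [Fml.renameFree]
    rw [ih _ _ ?_]
    intro v hv
    by_cases hvy : v = Sum.inl y
    · subst hvy; simp
    · rw [Function.update_of_ne hvy, Function.update_of_ne hvy]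
      exact hagree v (by simp [Fml.fv, hv, hvy])
  | box t X φ ih =>
    intro ρ₁ ρ₂ hagree
    simp only [Fml.renameFree]
    have hX : ∀ v ∈ X, ρ₁ v = ρ₂ v := fun v hv => hagree v (by simpa [Fml.fv] using hv)
    rw [Finset.image_congr fun v hv => hX v hv]
    congr 1
    apply ih
    intro v _
    by_cases hvX : v ∈ X
    · simp [hvX, hX v hvX]
    · simp [hvX]

def embB : Nat ⊕ Empty → Nat ⊕ Nat := Sum.map id (fun e => e.elim)

lemma gf_embB (f : Nat → Nat) (v : Nat ⊕ Empty) : gf f (embB v) = v := by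
  cases v with
  | inl n => rfl
  | inr e => exact e.elim

lemma embB_inj : Function.Injective embB := by
  intro v w h
  cases v with
  | inl n => cases w with
    | inl n' => simpa [embB] using h
    | inr e => exact e.elim
  | inr e => exact e.elim

lemma w2b_rename (f : Nat → Nat) :
    ∀ (φ : FmlB) (ρ : (Nat ⊕ Nat) → (Nat ⊕ Nat)),
      w2b f (Fml.renameFree ρ (liftB φ)) =
        Fml.renameFree (fun v => gf f (ρ (embB v))) φ := by
  intro φ
  induction φ with
  | atom P l =>
    intro ρ
    simp only [liftB, Fml.vmap, Fml.renameFree, w2b, List.map_map]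
    rfl
  | bot => intro _; rfl
  | imp φ ψ ih1 ih2 =>
    intro ρ
    simp only [liftB, Fml.vmap, Fml.renameFree, w2b] at *
    rw [ih1, ih2]
  | all y φ ih =>
    intro ρ
    simp only [liftB, Fml.vmap, Fml.renameFree, w2b] at *
    rw [ih]
    congr 1
    apply renameFree_congr
    intro v _
    by_cases hvy : v = Sum.inl y
    · subst hvy
      simp [embB, gf]
    · rw [Function.update_of_ne hvy, Function.update_of_ne ?_]
      intro hc
      exact hvy (embB_inj (by simpa [embB] using hc))
  | box t X φ ih =>
    intro ρ
    simp only [liftB, Fml.vmap, Fml.renameFree, w2b] at *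
    congr 1
    · rw [Finset.image_image, Finset.image_image]
      apply Finset.image_congr
      intro v _
      rfl
    · rw [ih]
      apply renameFree_congr
      intro v _
      have hmem : embB v ∈ X.image (Sum.map id fun e => e.elim) ↔ v ∈ X := by
        constructor
        · intro hm
          rcases Finset.mem_image.mp hm with ⟨u, hu, hue⟩
          have : u = v := by
            apply embB_inj
            simpa [embB] using hue
          exact this ▸ hu
        · intro hm
          exact Finset.mem_image_of_mem _ hm
      by_cases hvX : v ∈ X
      · simp [hvX, hmem.mpr hvX]
      · simp only [hvX, if_false]
        rw [if_neg (fun hc => hvX (hmem.mp hc))]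
        exact gf_embB f v

lemma w2b_liftB (f : Nat → Nat) : ∀ φ : FmlB, w2b f (liftB φ) = φ := by
  intro φ
  induction φ with
  | atom P l =>
    simp only [liftB, Fml.vmap, w2b, List.map_map]
    congr 1
    rw [show ((gf f) ∘ (Sum.map id fun e => e.elim)) = id from ?_, List.map_id]
    funext v
    cases v with
    | inl n => rfl
    | inr e => exact e.elim
  | bot => rfl
  | imp φ ψ ih1 ih2 =>
    simp only [liftB, Fml.vmap, w2b] at *
    rw [ih1, ih2]
  | all y φ ih =>
    simp only [liftB, Fml.vmap, w2b] at *
    rw [ih]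
  | box t X φ ih =>
    simp only [liftB, Fml.vmap, w2b] at *
    rw [ih]
    congr 1
    rw [Finset.image_image]
    rw [show ((gf f) ∘ (Sum.map id fun e => e.elim)) = id from ?_, Finset.image_id]
    funext v
    cases v with
    | inl n => rfl
    | inr e => exact e.elim

lemma mem_fbv_of_inl_mem_fv {V : Type} [DecidableEq V] {φ : Fml V} {n : Nat}
    (h : Sum.inl n ∈ φ.fv) : n ∈ φ.fbv := by
  simp only [Fml.fbv, Finset.mem_biUnion]
  exact ⟨Sum.inl n, h, by simp⟩

lemma cs_w2b {CS : Set FmlB} (hvc : VariantClosed CS) {χ : FmlW} (hχ : χ ∈ CSV CS) :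
    ∃ T : Finset (Nat ⊕ Nat), ∀ f, Good f T → w2b f χ ∈ CS := by
  obtain ⟨c, φ₀, ρ, hmem, hρinj, hρr, hρl, rfl⟩ := hχ
  refine ⟨φ₀.fbv.image Sum.inl, fun f hg => ?_⟩
  have hfnb : ∀ m, f m ∉ φ₀.fbv := by
    intro m hm
    exact hg.2 m (Finset.mem_image_of_mem _ hm)
  -- the composite renaming
  set ρ'' : (Nat ⊕ Empty) → (Nat ⊕ Empty) := fun v => gf f (ρ (embB v)) with hρ''
  -- the permutation agreeing with ρ'' on free variables of φ₀
  classical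
  set A : Finset Nat := φ₀.fbv.filter (fun n => ρ (Sum.inl n) ≠ Sum.inl n) with hA
  set mfun : Nat → Nat := fun n =>
    match ρ (Sum.inl n) with
    | Sum.inr m => m
    | Sum.inl _ => 0 with hmfun
  have hmA : ∀ n ∈ A, ρ (Sum.inl n) = Sum.inr (mfun n) := by
    intro n hn
    rcases hρl n with hl | ⟨m, hm⟩
    · exact absurd hl (by simpa [hA] using (Finset.mem_filter.mp hn).2)
    · simp [hmfun, hm]
  set g0 : Nat → Nat := fun n => f (mfun n) with hg0
  have hg0A : ∀ n ∈ A, g0 n ∉ φ₀.fbv := fun n _ => hfnb (mfun n)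
  have hg0inj : ∀ n₁ ∈ A, ∀ n₂ ∈ A, g0 n₁ = g0 n₂ → n₁ = n₂ := by
    intro n₁ h₁ n₂ h₂ heq
    have hm : mfun n₁ = mfun n₂ := hg.1 heq
    have hρeq : ρ (Sum.inl n₁) = ρ (Sum.inl n₂) := by
      rw [hmA n₁ h₁, hmA n₂ h₂, hm]
    simpa using hρinj hρeq
  set hfn : Nat → Nat := fun k =>
    if k ∈ A then g0 k
    else if hk : ∃ n ∈ A, g0 n = k then hk.choose else k with hhfn
  have hApos : ∀ n ∈ A, hfn n = g0 n := by intro n hn; simp [hhfn, hn]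
  have hAsub : A ⊆ φ₀.fbv := Finset.filter_subset _ _
  have hInv : ∀ n ∈ A, hfn (g0 n) = n := by
    intro n hn
    have h1 : g0 n ∉ A := fun hc => hg0A n hn (hAsub hc)
    have hex : ∃ n' ∈ A, g0 n' = g0 n := ⟨n, hn, rfl⟩
    simp only [hhfn, h1, if_false, dif_pos hex]
    exact hg0inj _ hex.choose_spec.1 _ hn hex.choose_spec.2
  have hFix : ∀ k, k ∉ A → (¬ ∃ n ∈ A, g0 n = k) → hfn k = k := by
    intro k h1 h2; simp [hhfn, h1, h2]
  have hInvol : Function.Involutive hfn := by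
    intro k
    by_cases h1 : k ∈ A
    · rw [hApos k h1]; exact hInv k h1
    · by_cases h2 : ∃ n ∈ A, g0 n = k
      · have hk : hfn k = h2.choose := by simp [hhfn, h1, dif_pos h2]
        rw [hk, hApos _ h2.choose_spec.1, h2.choose_spec.2]
      · rw [hFix k h1 h2, hFix k h1 h2]
  set π : (Nat ⊕ Empty) → (Nat ⊕ Empty) := Sum.map hfn id with hπ
  have hπinvol : Function.Involutive π := by
    intro v
    cases v with
    | inl n => simp [hπ, Sum.map, hInvol n]
    | inr e => exact e.elim
  have hπbij := hπinvol.bijective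
  have hagree : ∀ v ∈ φ₀.fv, π v = ρ'' v := by
    intro v hv
    cases v with
    | inr e => exact e.elim
    | inl n =>
      have hnf : n ∈ φ₀.fbv := mem_fbv_of_inl_mem_fv hv
      rcases hρl n with hl | ⟨m, hm⟩
      · have hnA : n ∉ A := by simp [hA, Finset.mem_filter, hl]
        have hnB : ¬ ∃ n' ∈ A, g0 n' = n := by
          rintro ⟨n', hn', he⟩
          exact hg0A n' hn' (he ▸ hnf)
        simp [hπ, Sum.map, hFix n hnA hnB, hρ'', embB, hl, gf]
      · have hnA : n ∈ A := Finset.mem_filter.mpr ⟨hnf, by simp [hm]⟩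
        have hmf : mfun n = m := by simp [hmfun, hm]
        simp [hπ, Sum.map, hApos n hnA, hg0, hmf, hρ'', embB, hm, gf]
  have heq : Fml.renameFree ρ'' φ₀ = Fml.renameFree π φ₀ :=
    (renameFree_congr φ₀ π ρ'' hagree).symm
  have hrw : w2b f (Fml.box (JTerm.jconst c) ∅ (Fml.renameFree ρ (liftB φ₀)))
      = Fml.box (JTerm.jconst c) ∅ (Fml.renameFree ρ'' φ₀) := by
    simp [w2b, w2b_rename, hρ'']
  rw [hrw, heq]
  exact (hvc φ₀ (Fml.renameFree π φ₀) c ⟨π, hπbij, rfl⟩).mp hmem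

lemma deriv_w2b {CS : Set FmlB} (hvc : VariantClosed CS) {ψ : FmlW}
    (h : Deriv Logic.folpb (CSV CS) ∅ ψ) :
    ∃ T : Finset (Nat ⊕ Nat), ∀ f, Good f T → Deriv Logic.folpb CS ∅ (w2b f ψ) := by
  induction h with
  | ax hax =>
    obtain ⟨T, hT⟩ := isAxiom_w2b hax
    exact ⟨T, fun f hg => Deriv.ax (hT f hg)⟩
  | cs hc =>
    obtain ⟨T, hT⟩ := cs_w2b hvc hc
    exact ⟨T, fun f hg => Deriv.cs (hT f hg)⟩
  | hyp hm => exact absurd hm (Set.notMem_empty _)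
  | mp h1 h2 ih1 ih2 =>
    obtain ⟨T₁, hT₁⟩ := ih1
    obtain ⟨T₂, hT₂⟩ := ih2
    exact ⟨T₁ ∪ T₂, fun f hg =>
      Deriv.mp (hT₁ f (hg.mono Finset.subset_union_left))
        (hT₂ f (hg.mono Finset.subset_union_right))⟩
  | genR h1 hside ih =>
    obtain ⟨T, hT⟩ := ih
    exact ⟨T, fun f hg =>
      Deriv.genR (hT f hg) (fun ψ hψ => absurd hψ (Set.notMem_empty _))⟩

end Conserv

/-- **Conservativity** of the witness-variable extension: for a variant-closed basic
constant specification `CS` and a basic-language formula `φ`, if `⊢_{CS(V)} φ` then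
`⊢_CS φ`. -/
theorem conservativity (CS : Set FmlB) (hCS : IsCS Logic.folpb CS)
    (hvc : VariantClosed CS) (φ : FmlB)
    (h : Deriv Logic.folpb (CSV CS) ∅ (liftB φ)) :
    Deriv Logic.folpb CS ∅ φ := by
  classical
  obtain ⟨T, hT⟩ := Conserv.deriv_w2b hvc h
  set K : Nat := T.sup (fun v => match v with | Sum.inl n => n | Sum.inr _ => 0) with hK
  have hg : Conserv.Good (fun m => m + (K + 1)) T := by
    constructor
    · intro a b hab
      simpa using hab
    · intro m hm
      have h1 : m + (K + 1) ≤ K := by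
        simpa using Finset.le_sup
          (f := fun v : Nat ⊕ Nat => match v with | Sum.inl n => n | Sum.inr _ => 0) hm
      omega
  have := hT _ hg
  rwa [Conserv.w2b_liftB] at this
end

section
/- If a FOLPb proof in the witness-variable language using CS(V) contains a witness variable a, and y is a basic variable not occurring anywhere in the proof, then the sequence obtained by replacing a with y throughout the proof is again a proof. -/
/-- A proof in FOLPb over the witness-variable language with extra axioms `CS`:
every entry is an axiom, a member of `CS`, or follows from earlier entries by
modus ponens or generalization. -/
def IsProofSeq (L : Logic) (CS : Set FmlW) (seq : List FmlW) : Prop :=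
  ∀ i, (hi : i < seq.length) →
    IsAxiom L (seq.get ⟨i, hi⟩) ∨ seq.get ⟨i, hi⟩ ∈ CS ∨
    (∃ j k, ∃ hj : j < i, ∃ hk : k < i,
      seq.get ⟨k, Nat.lt_trans hk hi⟩ =
        (seq.get ⟨j, Nat.lt_trans hj hi⟩).imp (seq.get ⟨i, hi⟩)) ∨
    (∃ j, ∃ hj : j < i, ∃ x : Nat,
      seq.get ⟨i, hi⟩ = Fml.all x (seq.get ⟨j, Nat.lt_trans hj hi⟩))

namespace RWaux
open Fml

variable {V : Type} [DecidableEq V]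

/-- Bound (binder) basic variables of a formula. -/
def bnd : Fml V → Finset Nat
  | .atom _ _ => ∅
  | .bot => ∅
  | .imp φ ψ => bnd φ ∪ bnd ψ
  | .all x φ => insert x (bnd φ)
  | .box _ _ φ => bnd φ

lemma fv_subset_allVars (φ : Fml V) : φ.fv ⊆ φ.allVars := by
  induction φ with
  | atom P l => simp [Fml.fv, Fml.allVars]
  | bot => simp [Fml.fv, Fml.allVars]
  | imp φ ψ ihφ ihψ =>
      simp only [Fml.fv, Fml.allVars]
      exact Finset.union_subset_union ihφ ihψ
  | all x φ ih =>
      simp only [Fml.fv, Fml.allVars]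
      exact (Finset.sdiff_subset).trans (ih.trans (Finset.subset_insert _ _))
  | box t X φ ih =>
      simp only [Fml.fv, Fml.allVars]
      intro v hv; exact Finset.mem_union_left _ (Finset.mem_union_left _ hv)

lemma inl_mem_allVars_of_bnd {φ : Fml V} {x : Nat} (h : x ∈ bnd φ) :
    Sum.inl x ∈ φ.allVars := by
  induction φ with
  | atom P l => simp [bnd] at h
  | bot => simp [bnd] at h
  | imp φ ψ ihφ ihψ =>
      simp only [bnd, Finset.mem_union] at h
      simp only [Fml.allVars, Finset.mem_union]
      exact h.imp ihφ ihψ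
  | all z φ ih =>
      simp only [bnd, Finset.mem_insert] at h
      simp only [Fml.allVars, Finset.mem_insert]
      exact h.imp (fun h => by rw [h]) ih
  | box t X φ ih =>
      simp only [bnd] at h
      simp only [Fml.allVars, Finset.mem_union]
      exact Or.inr (ih h)

lemma inl_mem_allVars_renameFree_of_bnd (ρ : (Nat ⊕ V) → (Nat ⊕ V)) {φ : Fml V} {x : Nat}
    (h : x ∈ bnd φ) : Sum.inl x ∈ (φ.renameFree ρ).allVars := by
  induction φ generalizing ρ with
  | atom P l => simp [bnd] at h
  | bot => simp [bnd] at h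
  | imp φ ψ ihφ ihψ =>
      simp only [bnd, Finset.mem_union] at h
      simp only [Fml.renameFree, Fml.allVars, Finset.mem_union]
      exact h.imp (ihφ _) (ihψ _)
  | all z φ ih =>
      simp only [bnd, Finset.mem_insert] at h
      simp only [Fml.renameFree, Fml.allVars, Finset.mem_insert]
      exact h.imp (fun h => by rw [h]) (ih _)
  | box t X φ ih =>
      simp only [bnd] at h
      simp only [Fml.renameFree, Fml.allVars, Finset.mem_union]
      exact Or.inr (ih _ h)

/-- Extensionality of `renameFree` on free variables. -/
lemma renameFree_congr {ρ₁ ρ₂ : (Nat ⊕ V) → (Nat ⊕ V)} (φ : Fml V)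
    (h : ∀ v ∈ φ.fv, ρ₁ v = ρ₂ v) : φ.renameFree ρ₁ = φ.renameFree ρ₂ := by
  induction φ generalizing ρ₁ ρ₂ with
  | atom P l =>
      simp only [Fml.renameFree, Fml.atom.injEq, true_and]
      exact List.map_congr_left fun v hv => h v (by simp [Fml.fv, hv])
  | bot => rfl
  | imp φ ψ ihφ ihψ =>
      simp only [Fml.fv, Finset.mem_union] at h
      simp only [Fml.renameFree]
      rw [ihφ (fun v hv => h v (Or.inl hv)), ihψ (fun v hv => h v (Or.inr hv))]
  | all z φ ih =>
      simp only [Fml.renameFree, Fml.all.injEq, true_and]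
      apply ih
      intro v hv
      by_cases hvz : v = Sum.inl z
      · subst hvz; simp
      · rw [Function.update_of_ne hvz, Function.update_of_ne hvz]
        exact h v (by simp [Fml.fv, Finset.mem_sdiff, hv, hvz])
  | box t X φ ih =>
      simp only [Fml.renameFree, Fml.box.injEq, true_and]
      constructor
      · exact Finset.image_congr fun v hv => h v (by simpa [Fml.fv] using hv)
      · apply ih
        intro v _
        by_cases hvX : v ∈ X
        · simp [hvX, h v (by simpa [Fml.fv] using hvX)]
        · simp [hvX]

lemma fv_renameFree_subset (ρ : (Nat ⊕ V) → (Nat ⊕ V)) (φ : Fml V) :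
    (φ.renameFree ρ).fv ⊆ φ.fv.image ρ := by
  induction φ generalizing ρ with
  | atom P l => simp [Fml.renameFree, Fml.fv, Finset.subset_iff]
  | bot => simp [Fml.renameFree, Fml.fv]
  | imp φ ψ ihφ ihψ =>
      simp only [Fml.renameFree, Fml.fv, Finset.image_union]
      exact Finset.union_subset_union (ihφ _) (ihψ _)
  | all z φ ih =>
      simp only [Fml.renameFree, Fml.fv]
      intro v hv
      rw [Finset.mem_sdiff] at hv
      obtain ⟨hv1, hv2⟩ := hv
      obtain ⟨u, hu, huv⟩ := Finset.mem_image.1 (ih _ hv1)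
      by_cases huz : u = Sum.inl z
      · subst huz; simp at huv
        exact absurd huv.symm (by simpa using hv2)
      · rw [Function.update_of_ne huz] at huv
        exact Finset.mem_image.2 ⟨u, Finset.mem_sdiff.2 ⟨hu, by simpa using huz⟩, huv⟩
  | box t X φ ih =>
      simp [Fml.renameFree, Fml.fv, Finset.subset_iff]

end RWaux
namespace RWaux
open Fml

set_option linter.unusedSectionVars false

variable {V : Type} [DecidableEq V]

lemma mem_av_impl {φ ψ : Fml V} {v} (h : v ∈ φ.allVars) : v ∈ (φ.imp ψ).allVars := by
  simp only [Fml.allVars, Finset.mem_union]; exact Or.inl h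
lemma mem_av_impr {φ ψ : Fml V} {v} (h : v ∈ ψ.allVars) : v ∈ (φ.imp ψ).allVars := by
  simp only [Fml.allVars, Finset.mem_union]; exact Or.inr h
lemma mem_av_all {φ : Fml V} {z v} (h : v ∈ φ.allVars) : v ∈ (Fml.all z φ).allVars := by
  simp only [Fml.allVars, Finset.mem_insert]; exact Or.inr h
lemma mem_av_all_self {φ : Fml V} {z} : Sum.inl z ∈ (Fml.all z φ).allVars := by
  simp [Fml.allVars]
lemma mem_av_box {t X} {φ : Fml V} {v} (h : v ∈ φ.allVars) : v ∈ (Fml.box t X φ).allVars := by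
  simp only [Fml.allVars, Finset.mem_union]; exact Or.inr h
lemma mem_av_boxX {t X} {φ : Fml V} {v} (h : v ∈ X) : v ∈ (Fml.box t X φ).allVars := by
  simp only [Fml.allVars, Finset.mem_union]; exact Or.inl (Or.inl h)

lemma bnd_impl {φ ψ : Fml V} {x} (h : x ∈ bnd φ) : x ∈ bnd (φ.imp ψ) := by
  simp only [bnd, Finset.mem_union]; exact Or.inl h
lemma bnd_impr {φ ψ : Fml V} {x} (h : x ∈ bnd ψ) : x ∈ bnd (φ.imp ψ) := by
  simp only [bnd, Finset.mem_union]; exact Or.inr h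
lemma bnd_all {φ : Fml V} {z x} (h : x ∈ bnd φ) : x ∈ bnd (Fml.all z φ) := by
  simp only [bnd, Finset.mem_insert]; exact Or.inr h
lemma bnd_all_self {φ : Fml V} {z} : z ∈ bnd (Fml.all z φ) := by simp [bnd]
lemma bnd_box {t X} {φ : Fml V} {x} (h : x ∈ bnd φ) : x ∈ bnd (Fml.box t X φ) := h

/-- The substitution function replacing witness variable `a` by basic variable `y`. -/
def sw (a y : Nat) : (Nat ⊕ Nat) → (Nat ⊕ Nat) :=
  fun v => if v = Sum.inr a then Sum.inl y else v

lemma sw_ne_inr (a y : Nat) (v : Nat ⊕ Nat) : sw a y v ≠ Sum.inr a := by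
  unfold sw; split <;> simp_all

lemma sw_inl (a y n : Nat) : sw a y (Sum.inl n) = Sum.inl n := by simp [sw]

lemma sw_eq_of_ne {a y : Nat} {v : Nat ⊕ Nat} (h : v ≠ Sum.inr a) : sw a y v = v := by
  simp [sw, h]

lemma sw_cases {a y : Nat} {v w : Nat ⊕ Nat} (h : sw a y v = w) :
    v = w ∨ (v = Sum.inr a ∧ w = Sum.inl y) := by
  unfold sw at h; split at h
  · exact Or.inr ⟨by assumption, h.symm⟩
  · exact Or.inl h

lemma sw_eq_inl_iff {a y : Nat} {v : Nat ⊕ Nat} {x : Nat} (hxy : x ≠ y) :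
    sw a y v = Sum.inl x ↔ v = Sum.inl x := by
  constructor
  · intro h
    rcases sw_cases h with h | ⟨_, h⟩
    · exact h
    · exact absurd (Sum.inl.inj h) hxy
  · intro h; subst h; exact sw_inl a y x

lemma mem_image_sw_inl_iff {a y x : Nat} (hxy : x ≠ y) (X : Finset (Nat ⊕ Nat)) :
    Sum.inl x ∈ X.image (sw a y) ↔ Sum.inl x ∈ X := by
  simp only [Finset.mem_image]
  constructor
  · rintro ⟨v, hv, hveq⟩
    rw [sw_eq_inl_iff hxy] at hveq; rwa [← hveq]
  · intro h; exact ⟨_, h, sw_inl a y x⟩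

/-- `replaceAll` of a renamed witness-free formula is a renaming. -/
lemma replaceAll_renameFree (a y : Nat) (ρ : (Nat ⊕ Nat) → (Nat ⊕ Nat)) (ψ : FmlW)
    (hwf : ∀ v ∈ ψ.allVars, v.isLeft = true) :
    (ψ.renameFree ρ).replaceAll (Sum.inr a) (Sum.inl y) = ψ.renameFree (sw a y ∘ ρ) := by
  induction ψ generalizing ρ with
  | atom P l =>
      simp only [Fml.renameFree, Fml.replaceAll, List.map_map]
      rfl
  | bot => rfl
  | imp φ ψ ihφ ihψ =>
      simp only [Fml.renameFree, Fml.replaceAll]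
      rw [ihφ _ (fun v hv => hwf v (mem_av_impl hv)),
          ihψ _ (fun v hv => hwf v (mem_av_impr hv))]
  | all z φ ih =>
      simp only [Fml.renameFree, Fml.replaceAll]
      rw [ih _ (fun v hv => hwf v (mem_av_all hv))]
      have hfun : (sw a y ∘ Function.update ρ (Sum.inl z) (Sum.inl z))
          = Function.update (sw a y ∘ ρ) (Sum.inl z) (Sum.inl z) := by
        funext v
        by_cases hv : v = Sum.inl z
        · subst hv; simp [sw]
        · simp [Function.update_of_ne hv]
      rw [hfun]
  | box t X φ ih =>
      simp only [Fml.renameFree, Fml.replaceAll]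
      rw [Finset.image_image, ih _ (fun v hv => hwf v (mem_av_box hv))]
      congr 1
      apply renameFree_congr
      intro v hv
      by_cases hvX : v ∈ X
      · simp [hvX, Function.comp]
      · simp only [hvX, if_false, Function.comp_apply]
        have hvl := hwf v (mem_av_box (fv_subset_allVars φ hv))
        cases v with
        | inl n => exact (sw_inl a y n).symm
        | inr m => simp at hvl

/-- Composition of renamings under suitable freshness conditions. -/
lemma renameFree_renameFree {σ g₁ g₂ : (Nat ⊕ Nat) → (Nat ⊕ Nat)} (ψ : FmlW)
    (hb : ∀ x ∈ bnd ψ, ∀ v ∈ ψ.allVars, σ v = Sum.inl x → v = Sum.inl x)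
    (h2 : ∀ v ∈ ψ.allVars, g₂ (σ v) = g₁ v)
    (h3 : ∀ u ∈ ψ.allVars, σ u ≠ u → σ u ∉ ψ.allVars ∨ g₂ (σ u) = σ u) :
    (ψ.renameFree σ).renameFree g₂ = ψ.renameFree g₁ := by
  induction ψ generalizing σ g₁ g₂ with
  | atom P l =>
      simp only [Fml.renameFree, List.map_map, Fml.atom.injEq, true_and]
      exact List.map_congr_left fun v hv => h2 v (by simp [Fml.allVars, hv])
  | bot => rfl
  | imp φ ψ ihφ ihψ =>
      simp only [Fml.renameFree]
      rw [ihφ (fun x hx v hv => hb x (bnd_impl hx) v (mem_av_impl hv))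
            (fun v hv => h2 v (mem_av_impl hv))
            (fun u hu hne => ((h3 u (mem_av_impl hu) hne).imp
              (fun h h' => h (mem_av_impl h')) id)),
          ihψ (fun x hx v hv => hb x (bnd_impr hx) v (mem_av_impr hv))
            (fun v hv => h2 v (mem_av_impr hv))
            (fun u hu hne => ((h3 u (mem_av_impr hu) hne).imp
              (fun h h' => h (mem_av_impr h')) id))]
  | all z φ ih =>
      simp only [Fml.renameFree, Fml.all.injEq, true_and]
      apply ih
      · intro x hx v hv hσv
        by_cases hvz : v = Sum.inl z
        · subst hvz
          rw [Function.update_self] at hσv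
          exact hσv
        · rw [Function.update_of_ne hvz] at hσv
          exact hb x (bnd_all hx) v (mem_av_all hv) hσv
      · intro v hv
        by_cases hvz : v = Sum.inl z
        · subst hvz
          rw [Function.update_self, Function.update_self, Function.update_self]
        · rw [Function.update_of_ne hvz]
          have hσvz : σ v ≠ Sum.inl z := by
            intro hc
            exact hvz (hb z bnd_all_self v (mem_av_all hv) hc)
          rw [Function.update_of_ne hσvz, Function.update_of_ne hvz]
          exact h2 v (mem_av_all hv)
      · intro u hu hne
        by_cases huz : u = Sum.inl z
        · subst huz; simp at hne
        · rw [Function.update_of_ne huz] at hne ⊢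
          rcases h3 u (mem_av_all hu) hne with h | h
          · left; exact fun hc => h (mem_av_all hc)
          · right
            by_cases hσuz : σ u = Sum.inl z
            · rw [hσuz, Function.update_self]
            · rw [Function.update_of_ne hσuz]; exact h
  | box t X φ ih =>
      simp only [Fml.renameFree, Fml.box.injEq, true_and]
      constructor
      · rw [Finset.image_image]
        apply Finset.image_congr
        intro v hv
        have hvX : v ∈ X := hv
        have hv' : σ v ∈ X.image σ := Finset.mem_image_of_mem σ hvX
        simp only [Function.comp_apply, if_pos hvX, if_pos hv']
        exact h2 v (mem_av_boxX hvX)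
      · apply ih
        · intro x hx v hv hσv
          by_cases hvX : v ∈ X
          · simp only [hvX, if_true] at hσv
            exact hb x (bnd_box hx) v (mem_av_boxX hvX) hσv
          · rw [if_neg hvX] at hσv
            exact hσv
        · intro v hv
          by_cases hvX : v ∈ X
          · have hv' : σ v ∈ X.image σ := Finset.mem_image_of_mem σ hvX
            simp only [hvX, if_true, hv', if_true]
            exact h2 v (mem_av_boxX hvX)
          · simp only [hvX, if_false]
            by_cases hvXσ : v ∈ X.image σ
            · simp only [hvXσ, if_true]
              obtain ⟨u, hu, huv⟩ := Finset.mem_image.1 hvXσ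
              have hune : σ u ≠ u := by
                rw [huv]; exact fun hc => hvX (hc ▸ hu)
              rcases h3 u (mem_av_boxX hu) hune with h | h
              · exact absurd (huv.symm ▸ mem_av_box hv) h
              · rw [← huv]; exact h
            · simp [hvXσ]
        · intro u hu hne
          by_cases huX : u ∈ X
          · simp only [huX, if_true] at hne ⊢
            rcases h3 u (mem_av_boxX huX) hne with h | h
            · left; exact fun hc => h (mem_av_box hc)
            · right
              by_cases hX2 : σ u ∈ X.image σ
              · simpa [hX2] using h
              · simp [hX2]
          · simp [huX] at hne

end RWaux
namespace RWaux
open Fml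

set_option linter.unusedSectionVars false

lemma sw_inj_cases {a y : Nat} {v w : Nat ⊕ Nat} (h : sw a y v = sw a y w) :
    v = w ∨ (v = Sum.inr a ∧ w = Sum.inl y) ∨ (v = Sum.inl y ∧ w = Sum.inr a) := by
  unfold sw at h
  split at h <;> split at h <;> simp_all

lemma fv_replaceAll {a y : Nat} (φ : FmlW) (h : ∀ z ∈ bnd φ, z ≠ y) :
    (φ.replaceAll (Sum.inr a) (Sum.inl y)).fv = φ.fv.image (sw a y) := by
  induction φ with
  | atom P l =>
      show (Fml.atom P (l.map (sw a y)) : FmlW).fv = _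
      show (l.map (sw a y)).toFinset = _
      ext w
      simp [Fml.fv]
  | bot => simp [Fml.replaceAll, Fml.fv]
  | imp φ ψ ihφ ihψ =>
      show ((φ.replaceAll _ _).imp (ψ.replaceAll _ _)).fv = _
      simp only [Fml.fv, Finset.image_union,
        ihφ (fun z hz => h z (bnd_impl hz)), ihψ (fun z hz => h z (bnd_impr hz))]
  | all z φ ih =>
      have hzy : z ≠ y := h z bnd_all_self
      show (Fml.all z (φ.replaceAll _ _)).fv = _
      simp only [Fml.fv, ih (fun z hz => h z (bnd_all hz))]
      ext w
      simp only [Finset.mem_sdiff, Finset.mem_image, Finset.mem_singleton]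
      constructor
      · rintro ⟨⟨v, hv, hvw⟩, hwz⟩
        refine ⟨v, ⟨hv, ?_⟩, hvw⟩
        intro hc; subst hc
        exact hwz (hvw ▸ sw_inl a y z)
      · rintro ⟨v, ⟨hv, hvz⟩, hvw⟩
        refine ⟨⟨v, hv, hvw⟩, ?_⟩
        intro hc
        exact hvz ((sw_eq_inl_iff hzy).1 (hvw.trans hc))
  | box t X φ ih =>
      show (Fml.box t (X.image (sw a y)) (φ.replaceAll _ _)).fv = _
      simp [Fml.fv]

lemma replaceAll_subst {a y x : Nat} (hxy : x ≠ y) (e : Nat ⊕ Nat) (φ : FmlW) :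
    (φ.subst (Sum.inl x) e).replaceAll (Sum.inr a) (Sum.inl y)
      = (φ.replaceAll (Sum.inr a) (Sum.inl y)).subst (Sum.inl x) (sw a y e) := by
  induction φ with
  | atom P l =>
      show Fml.atom P _ = Fml.atom P _
      simp only [List.map_map, Fml.atom.injEq, true_and]
      apply List.map_congr_left
      intro v _
      show sw a y (if v = Sum.inl x then e else v)
        = (if sw a y v = Sum.inl x then sw a y e else sw a y v)
      by_cases hv : v = Sum.inl x
      · subst hv; rw [if_pos rfl, if_pos (sw_inl a y x)]
      · rw [if_neg hv, if_neg (fun hc => hv ((sw_eq_inl_iff hxy).1 hc))]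
  | bot => rfl
  | imp φ ψ ihφ ihψ =>
      show Fml.imp _ _ = Fml.imp _ _
      rw [ihφ, ihψ]
  | all z φ ih =>
      show Fml.replaceAll _ _
          (if (Sum.inl x : Nat ⊕ Nat) = Sum.inl z then Fml.all z φ
            else Fml.all z (φ.subst (Sum.inl x) e))
        = (if (Sum.inl x : Nat ⊕ Nat) = Sum.inl z
            then Fml.all z (φ.replaceAll (Sum.inr a) (Sum.inl y))
            else Fml.all z
              ((φ.replaceAll (Sum.inr a) (Sum.inl y)).subst (Sum.inl x) (sw a y e)))
      by_cases hz : (Sum.inl x : Nat ⊕ Nat) = Sum.inl z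
      · rw [if_pos hz, if_pos hz]; rfl
      · rw [if_neg hz, if_neg hz]
        show Fml.all z _ = Fml.all z _
        rw [ih]
  | box t X φ ih =>
      show Fml.replaceAll _ _
          (if (Sum.inl x : Nat ⊕ Nat) ∈ X
            then Fml.box t (X.image fun v => if v = Sum.inl x then e else v)
              (φ.subst (Sum.inl x) e)
            else Fml.box t X φ)
        = (if (Sum.inl x : Nat ⊕ Nat) ∈ X.image (sw a y)
            then Fml.box t ((X.image (sw a y)).image
                fun v => if v = Sum.inl x then sw a y e else v)
              ((φ.replaceAll (Sum.inr a) (Sum.inl y)).subst (Sum.inl x) (sw a y e))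
            else Fml.box t (X.image (sw a y)) (φ.replaceAll (Sum.inr a) (Sum.inl y)))
      by_cases hX : (Sum.inl x : Nat ⊕ Nat) ∈ X
      · have hX' : (Sum.inl x : Nat ⊕ Nat) ∈ X.image (sw a y) :=
          (mem_image_sw_inl_iff hxy X).2 hX
        rw [if_pos hX, if_pos hX']
        show Fml.box t _ _ = Fml.box t _ _
        rw [ih]
        congr 1
        rw [Finset.image_image, Finset.image_image]
        apply Finset.image_congr
        intro v _
        show sw a y (if v = Sum.inl x then e else v)
          = (if sw a y v = Sum.inl x then sw a y e else sw a y v)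
        by_cases hv : v = Sum.inl x
        · subst hv; rw [if_pos rfl, if_pos (sw_inl a y x)]
        · rw [if_neg hv, if_neg (fun hc => hv ((sw_eq_inl_iff hxy).1 hc))]
      · have hX' : (Sum.inl x : Nat ⊕ Nat) ∉ X.image (sw a y) :=
          fun hc => hX ((mem_image_sw_inl_iff hxy X).1 hc)
        rw [if_neg hX, if_neg hX']
        rfl

lemma freeFor_replaceAll {a y : Nat} {e w : Nat ⊕ Nat} (he : e ≠ Sum.inl y)
    (hw : w ≠ Sum.inl y) (φ : FmlW) (hy : Sum.inl y ∉ φ.allVars)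
    (h : φ.freeFor e w) :
    (φ.replaceAll (Sum.inr a) (Sum.inl y)).freeFor (sw a y e) w := by
  induction φ with
  | atom P l => trivial
  | bot => trivial
  | imp φ ψ ihφ ihψ =>
      exact ⟨ihφ (fun hc => hy (mem_av_impl hc)) h.1,
             ihψ (fun hc => hy (mem_av_impr hc)) h.2⟩
  | all z φ ih =>
      have hzy : z ≠ y := fun hc => hy (hc ▸ mem_av_all_self)
      have hbnd : ∀ u ∈ bnd (Fml.all z φ), u ≠ y := by
        intro u hu hc
        exact hy (hc ▸ inl_mem_allVars_of_bnd hu)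
      rcases h with h | ⟨h1, h2⟩
      · left
        show w ∉ ((Fml.all z φ).replaceAll (Sum.inr a) (Sum.inl y)).fv
        rw [fv_replaceAll _ hbnd]
        intro hc
        obtain ⟨v, hv, hvw⟩ := Finset.mem_image.1 hc
        rcases sw_cases hvw with h' | ⟨_, h'⟩
        · exact h (h' ▸ hv)
        · exact hw h'
      · right
        refine ⟨?_, ih (fun hc => hy (mem_av_all hc)) h2⟩
        intro hc
        rcases sw_cases hc with h' | ⟨_, h'⟩
        · exact h1 h'
        · exact hzy (Sum.inl.inj h')
  | box t X φ ih =>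
      refine ⟨ih (fun hc => hy (mem_av_box hc)) h.1, ?_⟩
      intro hc
      have hbnd : ∀ u ∈ bnd φ, u ≠ y := by
        intro u hu hcc
        exact hy (mem_av_box (hcc ▸ inl_mem_allVars_of_bnd hu))
      rw [fv_replaceAll _ hbnd] at hc
      obtain ⟨v, hv, hvw⟩ := Finset.mem_image.1 hc
      rcases sw_inj_cases hvw with h' | ⟨h1, h2⟩ | ⟨h1, h2⟩
      · exact Finset.mem_image_of_mem _ (h.2 (h' ▸ hv))
      · exact absurd h2 he
      · exact absurd (h1 ▸ hv) (fun hcc => hy (mem_av_box (fv_subset_allVars φ hcc)))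

lemma subst_of_not_fv {w : Nat ⊕ Nat} {φ : FmlW} (e : Nat ⊕ Nat) (h : w ∉ φ.fv) :
    φ.subst w e = φ := by
  induction φ with
  | atom P l =>
      show Fml.atom P _ = _
      simp only [Fml.atom.injEq, true_and]
      have : ∀ v ∈ l, (if v = w then e else v) = v := by
        intro v hv
        rw [if_neg]
        intro hc; subst hc
        exact h (by simp [Fml.fv, hv])
      rw [List.map_congr_left this, List.map_id']
  | bot => rfl
  | imp φ ψ ihφ ihψ =>
      simp only [Fml.fv, Finset.mem_union, not_or] at h
      show Fml.imp _ _ = _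
      rw [ihφ h.1, ihψ h.2]
  | all z φ ih =>
      show (if w = Sum.inl z then Fml.all z φ else Fml.all z (φ.subst w e)) = _
      by_cases hz : w = Sum.inl z
      · rw [if_pos hz]
      · rw [if_neg hz]
        have : w ∉ φ.fv := by
          intro hc
          exact h (by simp [Fml.fv, Finset.mem_sdiff, hc, hz])
        rw [ih this]
  | box t X φ ih =>
      have hX : w ∉ X := h
      show (if w ∈ X
          then Fml.box t (X.image fun v => if v = w then e else v) (φ.subst w e)
          else Fml.box t X φ) = _
      rw [if_neg hX]

lemma mem_allVars_subst {w e : Nat ⊕ Nat} {φ : FmlW} (h : w ∈ φ.fv) :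
    e ∈ (φ.subst w e).allVars := by
  induction φ with
  | atom P l =>
      have hl : w ∈ l := by simpa [Fml.fv] using h
      show e ∈ (Fml.atom _ _ : FmlW).allVars
      simp only [Fml.allVars, List.mem_toFinset, List.mem_map]
      exact ⟨w, hl, if_pos rfl⟩
  | bot => simp [Fml.fv] at h
  | imp φ ψ ihφ ihψ =>
      simp only [Fml.fv, Finset.mem_union] at h
      show e ∈ (Fml.imp _ _ : FmlW).allVars
      simp only [Fml.allVars, Finset.mem_union]
      exact h.imp (fun h => ihφ h) (fun h => ihψ h)
  | all z φ ih =>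
      simp only [Fml.fv, Finset.mem_sdiff, Finset.mem_singleton] at h
      show e ∈ ((if w = Sum.inl z then Fml.all z φ
        else Fml.all z (φ.subst w e)) : FmlW).allVars
      rw [if_neg h.2]
      exact mem_av_all (ih h.1)
  | box t X φ ih =>
      have hX : w ∈ X := h
      show e ∈ ((if w ∈ X
          then Fml.box t (X.image fun v => if v = w then e else v) (φ.subst w e)
          else Fml.box t X φ) : FmlW).allVars
      rw [if_pos hX]
      exact mem_av_boxX (Finset.mem_image.2 ⟨w, hX, if_pos rfl⟩)

lemma freeFor_of_not_allVars {e w : Nat ⊕ Nat} {φ : FmlW}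
    (hne : ∀ n, e ≠ Sum.inl n) (h : e ∉ φ.allVars) : φ.freeFor e w := by
  induction φ with
  | atom P l => trivial
  | bot => trivial
  | imp φ ψ ihφ ihψ =>
      exact ⟨ihφ (fun hc => h (mem_av_impl hc)), ihψ (fun hc => h (mem_av_impr hc))⟩
  | all z φ ih =>
      exact Or.inr ⟨hne z, ih (fun hc => h (mem_av_all hc))⟩
  | box t X φ ih =>
      exact ⟨ih (fun hc => h (mem_av_box hc)),
        fun hc => absurd (mem_av_box (fv_subset_allVars φ hc)) h⟩

lemma isLeft_allVars_liftB (φ : FmlB) : ∀ v ∈ (liftB φ).allVars, v.isLeft = true := by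
  induction φ with
  | atom P l =>
      intro v hv
      simp only [liftB, Fml.vmap, Fml.allVars, List.mem_toFinset, List.mem_map] at hv
      obtain ⟨w, _, hw⟩ := hv
      cases w with
      | inl n => simp [← hw, Sum.map]
      | inr e => exact e.elim
  | bot => intro v hv; simp [liftB, Fml.vmap, Fml.allVars] at hv
  | imp φ ψ ihφ ihψ =>
      intro v hv
      simp only [liftB, Fml.vmap, Fml.allVars, Finset.mem_union] at hv
      exact hv.elim (fun h => ihφ v h) (fun h => ihψ v h)
  | all z φ ih =>
      intro v hv
      simp only [liftB, Fml.vmap, Fml.allVars, Finset.mem_insert] at hv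
      rcases hv with h | h
      · simp [h]
      · exact ih v h
  | box t X φ ih =>
      intro v hv
      simp only [liftB, Fml.vmap, Fml.allVars, Finset.mem_union, Finset.mem_image] at hv
      rcases hv with (⟨w, _, hw⟩ | ⟨n, _, hn⟩) | h
      · cases w with
        | inl n => simp [← hw, Sum.map]
        | inr e => exact e.elim
      · simp [← hn]
      · exact ih v h

lemma mem_allVars_renameFree_of_fix {y : Nat} {ρ : (Nat ⊕ Nat) → (Nat ⊕ Nat)}
    {ψ : FmlW} (hρ : ρ (Sum.inl y) = Sum.inl y) (hbnd : y ∉ bnd ψ)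
    (h : Sum.inl y ∈ ψ.allVars) : Sum.inl y ∈ (ψ.renameFree ρ).allVars := by
  induction ψ generalizing ρ with
  | atom P l =>
      have hl : Sum.inl y ∈ l := by simpa [Fml.allVars] using h
      simp only [Fml.renameFree, Fml.allVars, List.mem_toFinset, List.mem_map]
      exact ⟨Sum.inl y, hl, hρ⟩
  | bot => simp [Fml.allVars] at h
  | imp φ ψ ihφ ihψ =>
      simp only [Fml.allVars, Finset.mem_union] at h
      simp only [bnd, Finset.mem_union, not_or] at hbnd
      simp only [Fml.renameFree, Fml.allVars, Finset.mem_union]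
      exact h.imp (fun h => ihφ hρ hbnd.1 h) (fun h => ihψ hρ hbnd.2 h)
  | all z φ ih =>
      simp only [bnd, Finset.mem_insert, not_or] at hbnd
      have hzy : (Sum.inl y : Nat ⊕ Nat) ≠ Sum.inl z :=
        fun hc => hbnd.1 (Sum.inl.inj hc)
      simp only [Fml.allVars, Finset.mem_insert] at h
      rcases h with h | h
      · exact absurd h hzy
      · exact mem_av_all (ih (by rw [Function.update_of_ne hzy]; exact hρ) hbnd.2 h)
  | box t X φ ih =>
      simp only [Fml.allVars, Finset.mem_union] at h
      simp only [Fml.renameFree, Fml.allVars, Finset.mem_union]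
      rcases h with (h | h) | h
      · exact Or.inl (Or.inl (Finset.mem_image.2 ⟨Sum.inl y, h, hρ⟩))
      · exact Or.inl (Or.inr h)
      · refine Or.inr (ih ?_ hbnd h)
        by_cases hX : (Sum.inl y : Nat ⊕ Nat) ∈ X
        · rw [if_pos hX]; exact hρ
        · rw [if_neg hX]

lemma exists_fresh_inr (T : Finset (Nat ⊕ Nat)) : ∃ b : Nat, Sum.inr b ∉ T := by
  obtain ⟨b, hb⟩ := Infinite.exists_notMem_finset (T.image (Sum.elim id id))
  exact ⟨b, fun hc => hb (Finset.mem_image.2 ⟨Sum.inr b, hc, rfl⟩)⟩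

lemma exists_fresh_nat (T : Finset (Nat ⊕ Nat)) (s : Finset Nat) :
    ∃ z : Nat, Sum.inl z ∉ T ∧ Sum.inr z ∉ T ∧ z ∉ s := by
  obtain ⟨z, hz⟩ := Infinite.exists_notMem_finset (T.image (Sum.elim id id) ∪ s)
  simp only [Finset.mem_union, not_or] at hz
  exact ⟨z, fun hc => hz.1 (Finset.mem_image.2 ⟨Sum.inl z, hc, rfl⟩),
    fun hc => hz.1 (Finset.mem_image.2 ⟨Sum.inr z, hc, rfl⟩), hz.2⟩

end RWaux
namespace RWaux
open Fml

set_option linter.unusedSectionVars false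

lemma fv_replaceAll_inl_not_mem {a y x : Nat} {φ : FmlW} (hxy : x ≠ y)
    (hbnd : ∀ z ∈ bnd φ, z ≠ y) (h : Sum.inl x ∉ φ.fv) :
    Sum.inl x ∉ (φ.replaceAll (Sum.inr a) (Sum.inl y)).fv := by
  rw [fv_replaceAll _ hbnd]
  intro hc
  obtain ⟨v, hv, hvw⟩ := Finset.mem_image.1 hc
  exact h (((sw_eq_inl_iff hxy).1 hvw) ▸ hv)

lemma bnd_ne_of_not_allVars {y : Nat} {φ : FmlW} (hy : Sum.inl y ∉ φ.allVars) :
    ∀ z ∈ bnd φ, z ≠ y := by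
  intro z hz hc
  exact hy (hc ▸ inl_mem_allVars_of_bnd hz)

lemma replaceAll_axiom {a y : Nat} {ξ : FmlW} (hax : IsAxiom Logic.folpb ξ)
    (hy : Sum.inl y ∉ ξ.allVars) :
    IsAxiom Logic.folpb (ξ.replaceAll (Sum.inr a) (Sum.inl y)) := by
  cases hax with
  | a1k _ φ ψ => exact IsAxiom.a1k _ _ _
  | a1s _ φ ψ χ => exact IsAxiom.a1s _ _ _ _
  | a1dne _ φ => exact IsAxiom.a1dne _ _
  | a1allImp _ x φ ψ => exact IsAxiom.a1allImp _ _ _ _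
  | a1inst _ x e φ h =>
      have hyx : y ≠ x := fun hc => hy (hc ▸ mem_av_impl mem_av_all_self)
      have hyφ : Sum.inl y ∉ φ.allVars := fun hc => hy (mem_av_impl (mem_av_all hc))
      show IsAxiom Logic.folpb
        ((Fml.all x (φ.replaceAll (Sum.inr a) (Sum.inl y))).imp
          ((φ.subst (Sum.inl x) e).replaceAll (Sum.inr a) (Sum.inl y)))
      rw [replaceAll_subst (fun hc => hyx hc.symm) e φ]
      by_cases he : e = Sum.inl y
      · have hxfv : Sum.inl x ∉ φ.fv := by
          intro hc
          exact hy (mem_av_impr (he ▸ mem_allVars_subst hc))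
        have hxfv' : Sum.inl x ∉ (φ.replaceAll (Sum.inr a) (Sum.inl y)).fv :=
          fv_replaceAll_inl_not_mem (fun hc => hyx hc.symm)
            (bnd_ne_of_not_allVars hyφ) hxfv
        rw [subst_of_not_fv _ hxfv']
        obtain ⟨b, hb⟩ := exists_fresh_inr (φ.replaceAll (Sum.inr a) (Sum.inl y)).allVars
        have hax' := IsAxiom.a1inst (V := Nat) Logic.folpb x (Sum.inr b)
          (φ.replaceAll (Sum.inr a) (Sum.inl y))
          (freeFor_of_not_allVars (fun n hc => by simp at hc) hb)
        rwa [subst_of_not_fv _ hxfv'] at hax'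
      · exact IsAxiom.a1inst Logic.folpb x (sw a y e) _
          (freeFor_replaceAll he (fun hc => hyx (Sum.inl.inj hc).symm) φ hyφ h)
  | a1vac _ x φ h =>
      have hyx : y ≠ x := fun hc => hy (hc ▸ mem_av_impr mem_av_all_self)
      have hyφ : Sum.inl y ∉ φ.allVars := fun hc => hy (mem_av_impl hc)
      exact IsAxiom.a1vac Logic.folpb x _
        (fv_replaceAll_inl_not_mem (fun hc => hyx hc.symm)
          (bnd_ne_of_not_allVars hyφ) h)
  | a2 _ t X w φ h =>
      show IsAxiom Logic.folpb
        ((Fml.box t ((insert w X).image (sw a y)) (φ.replaceAll (Sum.inr a) (Sum.inl y))).imp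
          (Fml.box t (X.image (sw a y)) (φ.replaceAll (Sum.inr a) (Sum.inl y))))
      rw [Finset.image_insert]
      apply IsAxiom.a2
      have hyφ : Sum.inl y ∉ φ.allVars := fun hc => hy (mem_av_impl (mem_av_box hc))
      rw [fv_replaceAll _ (bnd_ne_of_not_allVars hyφ)]
      intro hc
      obtain ⟨v, hv, hvw⟩ := Finset.mem_image.1 hc
      rcases sw_inj_cases hvw with h' | ⟨h1, h2⟩ | ⟨h1, h2⟩
      · exact h (h' ▸ hv)
      · exact hy (h2 ▸ mem_av_impl (mem_av_boxX (Finset.mem_insert_self w _)))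
      · exact hy (mem_av_impl (mem_av_box (fv_subset_allVars φ (h1 ▸ hv))))
  | a3 _ t X w φ =>
      show IsAxiom Logic.folpb
        ((Fml.box t (X.image (sw a y)) (φ.replaceAll (Sum.inr a) (Sum.inl y))).imp
          (Fml.box t ((insert w X).image (sw a y)) (φ.replaceAll (Sum.inr a) (Sum.inl y))))
      rw [Finset.image_insert]
      exact IsAxiom.a3 _ _ _ _ _
  | b1 _ t X φ => exact IsAxiom.b1 _ _ _ _
  | b2 _ t s X φ ψ => exact IsAxiom.b2 _ _ _ _ _ _
  | b3l _ t s X φ => exact IsAxiom.b3l _ _ _ _ _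
  | b3r _ t s X φ => exact IsAxiom.b3r _ _ _ _ _
  | b4 _ t X φ => exact IsAxiom.b4 _ _ _ _
  | b5 _ t X x φ h =>
      have hyx : x ≠ y := by
        intro hc
        exact hy (hc ▸ mem_av_impr (mem_av_box mem_av_all_self))
      exact IsAxiom.b5 Logic.folpb t (X.image (sw a y)) x _
        (fun hc => h ((mem_image_sw_inl_iff hyx X).1 hc))
  | bb t X w φ h =>
      have hwy : w ≠ y := by
        intro hc
        exact hy (hc ▸ mem_av_impl mem_av_all_self)
      show IsAxiom Logic.folpb
        ((Fml.all w (Fml.box t ((insert (Sum.inl w) X).image (sw a y))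
            (φ.replaceAll (Sum.inr a) (Sum.inl y)))).imp
          (Fml.box t.bb (X.image (sw a y))
            (Fml.all w (φ.replaceAll (Sum.inr a) (Sum.inl y)))))
      rw [Finset.image_insert, sw_inl]
      exact IsAxiom.bb t (X.image (sw a y)) w _
        (fun hc => h ((mem_image_sw_inl_iff hwy X).1 hc))

end RWaux
namespace RWaux
open Fml

set_option linter.unusedSectionVars false

lemma inl_mem_image_emb_iff {X : Finset (Nat ⊕ Empty)} {n : Nat} :
    Sum.inl n ∈ X.image (Sum.map id (fun e : Empty => (e.elim : Nat)))
      ↔ Sum.inl n ∈ X := by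
  constructor
  · intro h
    obtain ⟨w, hw, hwe⟩ := Finset.mem_image.1 h
    cases w with
    | inl k =>
        have : k = n := by simpa [Sum.map] using hwe
        exact this ▸ hw
    | inr e => exact e.elim
  · intro h
    exact Finset.mem_image.2 ⟨Sum.inl n, h, rfl⟩

lemma liftB_renameFree (p : Nat → Nat) (φ : FmlB) :
    liftB (φ.renameFree (Sum.map p id)) = (liftB φ).renameFree (Sum.map p id) := by
  induction φ generalizing p with
  | atom P l =>
      show Fml.atom _ _ = Fml.atom _ _
      simp only [List.map_map, Fml.atom.injEq, true_and]
      apply List.map_congr_left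
      intro w _
      cases w with
      | inl n => rfl
      | inr e => exact e.elim
  | bot => rfl
  | imp φ ψ ihφ ihψ =>
      show (liftB (φ.renameFree (Sum.map p id))).imp (liftB (ψ.renameFree (Sum.map p id)))
        = ((liftB φ).renameFree (Sum.map p id)).imp ((liftB ψ).renameFree (Sum.map p id))
      rw [ihφ, ihψ]
  | all x φ ih =>
      show Fml.all x _ = Fml.all x _
      have e₁ : (Function.update (Sum.map p id : Nat ⊕ Empty → Nat ⊕ Empty)
          (Sum.inl x) (Sum.inl x)) = Sum.map (Function.update p x x) id := by
        funext w
        cases w with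
        | inl n =>
            by_cases hn : n = x
            · subst hn; simp
            · rw [Function.update_of_ne (by simpa using hn)]
              simp [Sum.map, Function.update_of_ne hn]
        | inr e => exact e.elim
      have e₂ : (Function.update (Sum.map p id : Nat ⊕ Nat → Nat ⊕ Nat)
          (Sum.inl x) (Sum.inl x)) = Sum.map (Function.update p x x) id := by
        funext w
        cases w with
        | inl n =>
            by_cases hn : n = x
            · subst hn; simp
            · rw [Function.update_of_ne (by simpa using hn)]
              simp [Sum.map, Function.update_of_ne hn]
        | inr m => rw [Function.update_of_ne (by simp)]; rfl
      rw [e₁, e₂]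
      show Fml.all x (liftB (φ.renameFree (Sum.map (Function.update p x x) id)))
        = Fml.all x ((liftB φ).renameFree (Sum.map (Function.update p x x) id))
      rw [ih]
  | box t X φ ih =>
      show Fml.box t _ _ = Fml.box t _ _
      have e₁ : (fun v => if v ∈ X then Sum.map p id v else v)
          = Sum.map (fun n => if Sum.inl n ∈ X then p n else n) id := by
        funext w
        cases w with
        | inl n =>
            by_cases hn : (Sum.inl n : Nat ⊕ Empty) ∈ X
            · simp [hn, Sum.map]
            · simp [hn, Sum.map]
        | inr e => exact e.elim
      have e₂ : (fun v : Nat ⊕ Nat =>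
            if v ∈ X.image (Sum.map id (fun e : Empty => (e.elim : Nat)))
            then Sum.map p id v else v)
          = Sum.map (fun n => if Sum.inl n ∈ X then p n else n) id := by
        funext w
        cases w with
        | inl n =>
            by_cases hn : (Sum.inl n : Nat ⊕ Empty) ∈ X
            · simp [inl_mem_image_emb_iff.2 hn, Sum.map, hn]
            · have : (Sum.inl n : Nat ⊕ Nat)
                  ∉ X.image (Sum.map id (fun e : Empty => (e.elim : Nat))) :=
                fun hc => hn (inl_mem_image_emb_iff.1 hc)
              simp [this, Sum.map, hn]
        | inr m =>
            by_cases hm : (Sum.inr m : Nat ⊕ Nat)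
                ∈ X.image (Sum.map id (fun e : Empty => (e.elim : Nat)))
            · simp [hm, Sum.map]
            · simp [hm, Sum.map]
      have hXeq : (X.image (Sum.map p id)).image
            (Sum.map id (fun e : Empty => (e.elim : Nat)))
          = (X.image (Sum.map id (fun e : Empty => (e.elim : Nat)))).image
            (Sum.map p id) := by
        rw [Finset.image_image, Finset.image_image]
        apply Finset.image_congr
        intro w _
        cases w with
        | inl n => rfl
        | inr e => exact e.elim
      rw [e₁, e₂, hXeq]
      show Fml.box t _ (liftB (φ.renameFree
          (Sum.map (fun n => if Sum.inl n ∈ X then p n else n) id)))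
        = Fml.box t _ ((liftB φ).renameFree
          (Sum.map (fun n => if Sum.inl n ∈ X then p n else n) id))
      rw [ih]

def swp (y n0 : Nat) : Nat → Nat :=
  fun n => if n = y then n0 else if n = n0 then y else n

lemma swp_invol (y n0 : Nat) : ∀ n, swp y n0 (swp y n0 n) = n := by
  intro n; unfold swp; split_ifs <;> omega

def cyc3 (y n0 z : Nat) : Nat → Nat :=
  fun n => if n = y then z else if n = n0 then y else if n = z then n0 else n

def cyc3inv (y n0 z : Nat) : Nat → Nat :=
  fun n => if n = z then y else if n = y then n0 else if n = n0 then z else n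

lemma cyc3_left (y n0 z : Nat) (h1 : n0 ≠ y) (h2 : z ≠ y) (h3 : z ≠ n0) :
    ∀ n, cyc3inv y n0 z (cyc3 y n0 z n) = n := by
  intro n; unfold cyc3 cyc3inv; split_ifs <;> omega

lemma cyc3_right (y n0 z : Nat) (h1 : n0 ≠ y) (h2 : z ≠ y) (h3 : z ≠ n0) :
    ∀ n, cyc3 y n0 z (cyc3inv y n0 z n) = n := by
  intro n; unfold cyc3 cyc3inv; split_ifs <;> omega

lemma rho_fiber {ρ : (Nat ⊕ Nat) → (Nat ⊕ Nat)}
    (hinr : ∀ m, ρ (Sum.inr m) = Sum.inr m)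
    (hinl : ∀ n, ρ (Sum.inl n) = Sum.inl n ∨ ∃ m, ρ (Sum.inl n) = Sum.inr m)
    {v : Nat ⊕ Nat} {n : Nat} (h : ρ v = Sum.inl n) : v = Sum.inl n := by
  cases v with
  | inl k =>
      rcases hinl k with h' | ⟨m, h'⟩
      · rw [h'] at h; exact h
      · rw [h'] at h; exact absurd h (by simp)
  | inr m => rw [hinr m] at h; exact absurd h (by simp)

end RWaux
namespace RWaux
open Fml

set_option linter.unusedSectionVars false
set_option maxHeartbeats 1000000

lemma sw_inra (a y : Nat) : sw a y (Sum.inr a) = Sum.inl y := if_pos rfl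

lemma replaceAll_csv {CS : Set FmlB} (hvc : VariantClosed CS) {a y : Nat} {χ : FmlW}
    (hχ : χ ∈ CSV CS) (hy : Sum.inl y ∉ χ.allVars) :
    χ.replaceAll (Sum.inr a) (Sum.inl y) ∈ CSV CS := by
  obtain ⟨c, φ, ρ, hcs, hinj, hinr, hinl, rfl⟩ := hχ
  have hwf := isLeft_allVars_liftB φ
  have hyψ : Sum.inl y ∉ ((liftB φ).renameFree ρ).allVars := by
    intro hc; exact hy (mem_av_box hc)
  have hbndy : ∀ z ∈ bnd (liftB φ), z ≠ y := by
    intro z hz hc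
    exact hyψ (hc ▸ inl_mem_allVars_renameFree_of_bnd ρ hz)
  have hAeq : ((liftB φ).renameFree ρ).replaceAll (Sum.inr a) (Sum.inl y)
      = (liftB φ).renameFree (sw a y ∘ ρ) := replaceAll_renameFree a y ρ _ hwf
  have hmem_inl : ∀ v ∈ (liftB φ).allVars, ∃ k, v = Sum.inl k := by
    intro v hv
    cases v with
    | inl k => exact ⟨k, rfl⟩
    | inr m => simpa using hwf _ hv
  by_cases hA : ∀ n, ρ (Sum.inl n) = Sum.inr a → n = y
  · refine ⟨c, φ, fun v => if v = Sum.inr a then Sum.inr a else sw a y (ρ v),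
      hcs, ?_, ?_, ?_, ?_⟩
    · intro u v huv
      simp only at huv
      by_cases hu : u = Sum.inr a <;> by_cases hv : v = Sum.inr a
      · rw [hu, hv]
      · rw [if_pos hu, if_neg hv] at huv
        exact absurd huv.symm (sw_ne_inr a y _)
      · rw [if_neg hu, if_pos hv] at huv
        exact absurd huv (sw_ne_inr a y _)
      · rw [if_neg hu, if_neg hv] at huv
        rcases sw_inj_cases huv with h | ⟨h1, h2⟩ | ⟨h1, h2⟩
        · exact hinj h
        · have hv' := rho_fiber hinr hinl h2
          cases u with
          | inl n => rw [hv']; exact congrArg Sum.inl (hA n h1)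
          | inr m =>
              rw [hinr m] at h1
              cases Sum.inr.inj h1
              exact absurd rfl hu
        · have hu' := rho_fiber hinr hinl h1
          cases v with
          | inl n => rw [hu']; exact (congrArg Sum.inl (hA n h2)).symm
          | inr m =>
              rw [hinr m] at h2
              cases Sum.inr.inj h2
              exact absurd rfl hv
    · intro m
      by_cases hm : m = a
      · subst hm; simp
      · simp only
        rw [if_neg (by simp [hm]), hinr m, sw_eq_of_ne (by simp [hm])]
    · intro n
      simp only
      rw [if_neg (by simp)]
      rcases hinl n with h | ⟨m, h⟩
      · rw [h, sw_inl]; exact Or.inl rfl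
      · rw [h]
        by_cases hm : m = a
        · subst hm
          left
          rw [sw_inra]
          exact congrArg Sum.inl (hA n h).symm
        · right; exact ⟨m, sw_eq_of_ne (by simp [hm])⟩
    · show Fml.box (JTerm.jconst c) (Finset.image (sw a y) ∅)
          (((liftB φ).renameFree ρ).replaceAll (Sum.inr a) (Sum.inl y)) = _
      rw [Finset.image_empty, hAeq]
      congr 1
      apply renameFree_congr
      intro v hv
      obtain ⟨k, rfl⟩ := hmem_inl v (fv_subset_allVars _ hv)
      simp only [Function.comp_apply]
      rw [if_neg (by simp)]
  · push_neg at hA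
    obtain ⟨n0, hn0, hn0y⟩ := hA
    by_cases hρy : ρ (Sum.inl y) = Sum.inl y
    ·
      -- Case 2b : ρ (inl y) = inl y, so y does not occur in liftB φ at all.
      have hyψ0 : Sum.inl y ∉ (liftB φ).allVars := by
        intro hc
        exact hyψ (mem_allVars_renameFree_of_fix hρy (fun hz => hbndy y hz rfl) hc)
      set p := swp y n0 with hp
      have hpp : ∀ n, p (p n) = n := by rw [hp]; exact swp_invol y n0
      have hpy : p y = n0 := by simp [hp, swp]
      have hpn0 : p n0 = y := by rw [hp]; unfold swp; split_ifs <;> omega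
      have hp_eq_y : ∀ k, p k = y → k = n0 := by
        intro k; rw [hp]; unfold swp; split_ifs <;> omega
      have hp_eq_n0 : ∀ k, p k = n0 → k = y := by
        intro k; rw [hp]; unfold swp; split_ifs <;> omega
      have hp_fix : ∀ k, k ≠ y → k ≠ n0 → p k = k := by
        intro k h1 h2; rw [hp]; unfold swp; split_ifs <;> omega
      have hbij : Function.Bijective (Sum.map p id : Nat ⊕ Empty → Nat ⊕ Empty) := by
        apply Function.Involutive.bijective
        intro w
        cases w with
        | inl n => show Sum.inl (p (p n)) = _; rw [hpp n]
        | inr e => exact e.elim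
      have hτinj : ∀ u v : Nat ⊕ Nat,
          Sum.map p id u = Sum.map p id v → u = v := by
        intro u v h
        cases u with
        | inl k =>
            cases v with
            | inl k' =>
                have h' : p k = p k' := by simpa [Sum.map] using h
                have h'' : p (p k) = p (p k') := congrArg p h'
                rw [hpp k, hpp k'] at h''
                rw [h'']
            | inr m => simp [Sum.map] at h
        | inr m =>
            cases v with
            | inl k' => simp [Sum.map] at h
            | inr m' => simpa [Sum.map] using h
      have hgy : sw a y (ρ (Sum.map p id (Sum.inl y))) = Sum.inl y := by
        show sw a y (ρ (Sum.inl (p y))) = _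
        rw [hpy, hn0, sw_inra]
      have hgn0 : ∀ w : Nat ⊕ Nat, sw a y (ρ (Sum.map p id w)) ≠ Sum.inl n0 := by
        intro w hc
        have h1 : ρ (Sum.map p id w) = Sum.inl n0 := (sw_eq_inl_iff hn0y).1 hc
        have h2 := rho_fiber hinr hinl h1
        rw [h2, hn0] at h1
        exact absurd h1 (by simp)
      refine ⟨c, φ.renameFree (Sum.map p id),
        fun v => if v = Sum.inr a then Sum.inr a
          else if v = Sum.inl n0 then Sum.inl n0
          else sw a y (ρ (Sum.map p id v)),
        (hvc φ _ c ⟨Sum.map p id, hbij, rfl⟩).1 hcs, ?_, ?_, ?_, ?_⟩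
      · -- injectivity
        intro u v huv
        simp only at huv
        by_cases hu1 : u = Sum.inr a <;> by_cases hv1 : v = Sum.inr a
        · rw [hu1, hv1]
        · rw [if_pos hu1, if_neg hv1] at huv
          by_cases hv2 : v = Sum.inl n0
          · rw [if_pos hv2] at huv; exact absurd huv (by simp)
          · rw [if_neg hv2] at huv; exact absurd huv.symm (sw_ne_inr a y _)
        · rw [if_neg hu1, if_pos hv1] at huv
          by_cases hu2 : u = Sum.inl n0
          · rw [if_pos hu2] at huv; exact absurd huv (by simp)
          · rw [if_neg hu2] at huv; exact absurd huv (sw_ne_inr a y _)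
        · rw [if_neg hu1, if_neg hv1] at huv
          by_cases hu2 : u = Sum.inl n0 <;> by_cases hv2 : v = Sum.inl n0
          · rw [hu2, hv2]
          · rw [if_pos hu2, if_neg hv2] at huv
            exact absurd huv.symm (hgn0 v)
          · rw [if_neg hu2, if_pos hv2] at huv
            exact absurd huv (hgn0 u)
          · rw [if_neg hu2, if_neg hv2] at huv
            rcases sw_inj_cases huv with h | ⟨h1, h2⟩ | ⟨h1, h2⟩
            · exact hτinj u v (hinj h)
            · have h3 := rho_fiber hinr hinl h2
              cases v with
              | inl k =>
                  have hky : p k = y := by simpa [Sum.map] using h3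
                  exact absurd (congrArg Sum.inl (hp_eq_y k hky)) hv2
              | inr m => simp [Sum.map] at h3
            · have h3 := rho_fiber hinr hinl h1
              cases u with
              | inl k =>
                  have hky : p k = y := by simpa [Sum.map] using h3
                  exact absurd (congrArg Sum.inl (hp_eq_y k hky)) hu2
              | inr m => simp [Sum.map] at h3
      · -- fixes inr
        intro m
        simp only
        by_cases hm : m = a
        · subst hm; simp
        · rw [if_neg (by simp [hm]), if_neg (by simp)]
          show sw a y (ρ (Sum.inr m)) = _
          rw [hinr m, sw_eq_of_ne (by simp [hm])]
      · -- inl condition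
        intro n
        simp only
        rw [if_neg (by simp)]
        by_cases hn : n = n0
        · rw [if_pos (by rw [hn])]
          exact Or.inl (by rw [hn])
        · rw [if_neg (by simpa using hn)]
          show sw a y (ρ (Sum.inl (p n))) = Sum.inl n
            ∨ ∃ m, sw a y (ρ (Sum.inl (p n))) = Sum.inr m
          by_cases hn2 : n = y
          · subst hn2
            rw [hpy, hn0, sw_inra]
            exact Or.inl rfl
          · rw [hp_fix n hn2 hn]
            rcases hinl n with h | ⟨m, h⟩
            · rw [h, sw_inl]; exact Or.inl rfl
            · have hm : m ≠ a := by
                intro hc; subst hc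
                exact hn (Sum.inl.inj (hinj (h.trans hn0.symm)))
              rw [h, sw_eq_of_ne (by simp [hm])]
              exact Or.inr ⟨m, rfl⟩
      · -- the formula identity
        show Fml.box (JTerm.jconst c) (Finset.image (sw a y) ∅)
            (((liftB φ).renameFree ρ).replaceAll (Sum.inr a) (Sum.inl y)) = _
        rw [Finset.image_empty, hAeq, liftB_renameFree p φ]
        have hrr := renameFree_renameFree (σ := Sum.map p id)
          (g₂ := fun v => sw a y (ρ (Sum.map p id v))) (g₁ := sw a y ∘ ρ) (liftB φ)
          (by -- hb
            intro x hx v hv hxv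
            obtain ⟨k, rfl⟩ := hmem_inl v hv
            have hpk : p k = x := by simpa [Sum.map] using hxv
            by_cases hk : k = y
            · exact absurd (hk ▸ hv) hyψ0
            · by_cases hk2 : k = n0
              · subst hk2
                rw [hpn0] at hpk
                exact absurd hpk.symm (hbndy x hx)
              · rw [hp_fix k hk hk2] at hpk
                rw [hpk])
          (by -- h2
            intro v hv
            obtain ⟨k, rfl⟩ := hmem_inl v hv
            show sw a y (ρ (Sum.inl (p (p k)))) = sw a y (ρ (Sum.inl k))
            rw [hpp k])
          (by -- h3
            intro u hu hne
            obtain ⟨k, rfl⟩ := hmem_inl u hu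
            have hpk : p k ≠ k := by
              intro hc; exact hne (by simp [Sum.map, hc])
            by_cases hk : k = y
            · exact absurd (hk ▸ hu) hyψ0
            · have hk2 : k = n0 := by
                by_contra hk2
                exact hpk (hp_fix k hk hk2)
              right
              rw [hk2]
              show sw a y (ρ (Sum.inl (p (p n0)))) = Sum.inl (p n0)
              rw [hpp n0, hn0, sw_inra, hpn0])
        rw [← hrr]
        congr 1
        apply renameFree_congr
        intro v hv
        obtain ⟨u, hu, huv⟩ := Finset.mem_image.1 (fv_renameFree_subset _ _ hv)
        obtain ⟨k, rfl⟩ := hmem_inl u (fv_subset_allVars _ hu)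
        subst huv
        have hne2 : (Sum.inl (p k) : Nat ⊕ Nat) ≠ Sum.inl n0 := by
          intro hc
          have hky : k = y := hp_eq_n0 k (Sum.inl.inj hc)
          exact hyψ0 (by rw [← hky]; exact fv_subset_allVars _ hu)
        show sw a y (ρ (Sum.map p id (Sum.inl (p k)))) =
          (if (Sum.inl (p k) : Nat ⊕ Nat) = Sum.inr a then Sum.inr a
            else if (Sum.inl (p k) : Nat ⊕ Nat) = Sum.inl n0 then Sum.inl n0
            else sw a y (ρ (Sum.map p id (Sum.inl (p k)))))
        rw [if_neg (by simp), if_neg hne2]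

    ·
      -- Case 2c : ρ (inl y) = inr m for some m ≠ a.
      rcases hinl y with hcontra | ⟨m, hm⟩
      · exact absurd hcontra hρy
      have hma : m ≠ a := by
        intro hc; subst hc
        exact hn0y (Sum.inl.inj (hinj (hn0.trans hm.symm)))
      obtain ⟨z, hz1, hz1r, hz3⟩ := exists_fresh_nat (liftB φ).allVars {y, n0}
      have hzy : z ≠ y := by simp at hz3; exact hz3.1
      have hzn0 : z ≠ n0 := by simp at hz3; exact hz3.2
      set p := cyc3 y n0 z with hp
      set q := cyc3inv y n0 z with hq
      have hqp : ∀ n, q (p n) = n := by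
        rw [hp, hq]; exact cyc3_left y n0 z hn0y hzy hzn0
      have hpq : ∀ n, p (q n) = n := by
        rw [hp, hq]; exact cyc3_right y n0 z hn0y hzy hzn0
      have hpy : p y = z := by rw [hp]; unfold cyc3; simp
      have hpn0 : p n0 = y := by rw [hp]; unfold cyc3; split_ifs <;> omega
      have hqy : q y = n0 := by rw [hq]; unfold cyc3inv; split_ifs <;> omega
      have hqz : q z = y := by rw [hq]; unfold cyc3inv; simp
      have hp_fix : ∀ k, k ≠ y → k ≠ n0 → k ≠ z → p k = k := by
        intro k h1 h2 h3; rw [hp]; unfold cyc3; split_ifs <;> omega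
      have hq_fix : ∀ k, k ≠ y → k ≠ n0 → k ≠ z → q k = k := by
        intro k h1 h2 h3; rw [hq]; unfold cyc3inv; split_ifs <;> omega
      have hp_eq_n0 : ∀ k, p k = n0 → k = z := by
        intro k; rw [hp]; unfold cyc3; split_ifs <;> omega
      have hbij : Function.Bijective (Sum.map p id : Nat ⊕ Empty → Nat ⊕ Empty) := by
        apply Function.bijective_iff_has_inverse.2
        refine ⟨Sum.map q id, ?_, ?_⟩
        · intro w
          cases w with
          | inl n => show Sum.inl (q (p n)) = _; rw [hqp n]
          | inr e => exact e.elim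
        · intro w
          cases w with
          | inl n => show Sum.inl (p (q n)) = _; rw [hpq n]
          | inr e => exact e.elim
      have hτinvinj : ∀ u v : Nat ⊕ Nat,
          Sum.map q id u = Sum.map q id v → u = v := by
        intro u v h
        cases u with
        | inl k =>
            cases v with
            | inl k' =>
                have h' : q k = q k' := by simpa [Sum.map] using h
                have h'' : p (q k) = p (q k') := congrArg p h'
                rw [hpq k, hpq k'] at h''
                rw [h'']
            | inr mm => simp [Sum.map] at h
        | inr mm =>
            cases v with
            | inl k' => simp [Sum.map] at h
            | inr mm' => simpa [Sum.map] using h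
      have hgn0 : ∀ w : Nat ⊕ Nat, sw a y (ρ (Sum.map q id w)) ≠ Sum.inl n0 := by
        intro w hc
        have h1 : ρ (Sum.map q id w) = Sum.inl n0 := (sw_eq_inl_iff hn0y).1 hc
        have h2 := rho_fiber hinr hinl h1
        rw [h2, hn0] at h1
        exact absurd h1 (by simp)
      refine ⟨c, φ.renameFree (Sum.map p id),
        fun v => if v = Sum.inr a then Sum.inr a
          else if v = Sum.inl n0 then Sum.inl n0
          else sw a y (ρ (Sum.map q id v)),
        (hvc φ _ c ⟨Sum.map p id, hbij, rfl⟩).1 hcs, ?_, ?_, ?_, ?_⟩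
      · -- injectivity
        intro u v huv
        simp only at huv
        by_cases hu1 : u = Sum.inr a <;> by_cases hv1 : v = Sum.inr a
        · rw [hu1, hv1]
        · rw [if_pos hu1, if_neg hv1] at huv
          by_cases hv2 : v = Sum.inl n0
          · rw [if_pos hv2] at huv; exact absurd huv (by simp)
          · rw [if_neg hv2] at huv; exact absurd huv.symm (sw_ne_inr a y _)
        · rw [if_neg hu1, if_pos hv1] at huv
          by_cases hu2 : u = Sum.inl n0
          · rw [if_pos hu2] at huv; exact absurd huv (by simp)
          · rw [if_neg hu2] at huv; exact absurd huv (sw_ne_inr a y _)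
        · rw [if_neg hu1, if_neg hv1] at huv
          by_cases hu2 : u = Sum.inl n0 <;> by_cases hv2 : v = Sum.inl n0
          · rw [hu2, hv2]
          · rw [if_pos hu2, if_neg hv2] at huv
            exact absurd huv.symm (hgn0 v)
          · rw [if_neg hu2, if_pos hv2] at huv
            exact absurd huv (hgn0 u)
          · rw [if_neg hu2, if_neg hv2] at huv
            rcases sw_inj_cases huv with h | ⟨h1, h2⟩ | ⟨h1, h2⟩
            · exact hτinvinj u v (hinj h)
            · have h3 := rho_fiber hinr hinl h2
              rw [h3] at h2
              exact absurd h2 hρy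
            · have h3 := rho_fiber hinr hinl h1
              rw [h3] at h1
              exact absurd h1 hρy
      · -- fixes inr
        intro mm
        simp only
        by_cases hmm : mm = a
        · subst hmm; simp
        · rw [if_neg (by simp [hmm]), if_neg (by simp)]
          show sw a y (ρ (Sum.inr mm)) = _
          rw [hinr mm, sw_eq_of_ne (by simp [hmm])]
      · -- inl condition
        intro n
        simp only
        rw [if_neg (by simp)]
        by_cases hn : n = n0
        · rw [if_pos (by rw [hn])]
          exact Or.inl (by rw [hn])
        · rw [if_neg (by simpa using hn)]
          show sw a y (ρ (Sum.inl (q n))) = Sum.inl n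
            ∨ ∃ mm, sw a y (ρ (Sum.inl (q n))) = Sum.inr mm
          by_cases hn2 : n = y
          · subst hn2
            rw [hqy, hn0, sw_inra]
            exact Or.inl rfl
          · by_cases hn3 : n = z
            · subst hn3
              rw [hqz, hm, sw_eq_of_ne (by simp [hma])]
              exact Or.inr ⟨m, rfl⟩
            · rw [hq_fix n hn2 hn hn3]
              rcases hinl n with h | ⟨mm, h⟩
              · rw [h, sw_inl]; exact Or.inl rfl
              · have hmm : mm ≠ a := by
                  intro hc; subst hc
                  exact hn (Sum.inl.inj (hinj (h.trans hn0.symm)))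
                rw [h, sw_eq_of_ne (by simp [hmm])]
                exact Or.inr ⟨mm, rfl⟩
      · -- the formula identity
        show Fml.box (JTerm.jconst c) (Finset.image (sw a y) ∅)
            (((liftB φ).renameFree ρ).replaceAll (Sum.inr a) (Sum.inl y)) = _
        rw [Finset.image_empty, hAeq, liftB_renameFree p φ]
        have hrr := renameFree_renameFree (σ := Sum.map p id)
          (g₂ := fun v => sw a y (ρ (Sum.map q id v))) (g₁ := sw a y ∘ ρ) (liftB φ)
          (by -- hb
            intro x hx v hv hxv
            obtain ⟨k, rfl⟩ := hmem_inl v hv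
            have hpk : p k = x := by simpa [Sum.map] using hxv
            by_cases hk : k = y
            · subst hk
              rw [hpy] at hpk
              rw [← hpk] at hx
              exact absurd (inl_mem_allVars_of_bnd hx) hz1
            · by_cases hk2 : k = n0
              · subst hk2
                rw [hpn0] at hpk
                exact absurd hpk.symm (hbndy x hx)
              · by_cases hk3 : k = z
                · exact absurd (hk3 ▸ hv) hz1
                · rw [hp_fix k hk hk2 hk3] at hpk
                  rw [hpk])
          (by -- h2
            intro v hv
            obtain ⟨k, rfl⟩ := hmem_inl v hv
            show sw a y (ρ (Sum.inl (q (p k)))) = sw a y (ρ (Sum.inl k))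
            rw [hqp k])
          (by -- h3
            intro u hu hne
            obtain ⟨k, rfl⟩ := hmem_inl u hu
            have hpk : p k ≠ k := by
              intro hc; exact hne (by simp [Sum.map, hc])
            by_cases hk : k = y
            · left
              have hkz : Sum.map p id (Sum.inl k) = (Sum.inl z : Nat ⊕ Nat) := by
                simp [Sum.map, hk, hpy]
              rw [hkz]
              exact hz1
            · by_cases hk3 : k = z
              · exact absurd (hk3 ▸ hu) hz1
              · have hk2 : k = n0 := by
                  by_contra hk2
                  exact hpk (hp_fix k hk hk2 hk3)
                right
                rw [hk2]
                show sw a y (ρ (Sum.inl (q (p n0)))) = Sum.inl (p n0)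
                rw [hqp n0, hn0, sw_inra, hpn0])
        rw [← hrr]
        congr 1
        apply renameFree_congr
        intro v hv
        obtain ⟨u, hu, huv⟩ := Finset.mem_image.1 (fv_renameFree_subset _ _ hv)
        obtain ⟨k, rfl⟩ := hmem_inl u (fv_subset_allVars _ hu)
        subst huv
        have hne2 : (Sum.inl (p k) : Nat ⊕ Nat) ≠ Sum.inl n0 := by
          intro hc
          have hkz : k = z := hp_eq_n0 k (Sum.inl.inj hc)
          exact hz1 (by rw [← hkz]; exact fv_subset_allVars _ hu)
        show sw a y (ρ (Sum.map q id (Sum.inl (p k)))) =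
          (if (Sum.inl (p k) : Nat ⊕ Nat) = Sum.inr a then Sum.inr a
            else if (Sum.inl (p k) : Nat ⊕ Nat) = Sum.inl n0 then Sum.inl n0
            else sw a y (ρ (Sum.map q id (Sum.inl (p k)))))
        rw [if_neg (by simp), if_neg hne2]

end RWaux
/-- If a FOLPb proof in the witness-variable language (using `CS(V)`) contains the
witness variable `a`, and `y` is a basic variable occurring nowhere in the proof,
then replacing `a` by `y` throughout yields again a proof. -/
theorem replace_witness_in_proof (CS : Set FmlB) (hCS : IsCS Logic.folpb CS)
    (hvc : VariantClosed CS) (seq : List FmlW)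
    (hp : IsProofSeq Logic.folpb (CSV CS) seq)
    (a y : Nat)
    (ha : ∃ φ ∈ seq, Sum.inr a ∈ φ.allVars)
    (hy : ∀ φ ∈ seq, Sum.inl y ∉ φ.allVars) :
    IsProofSeq Logic.folpb (CSV CS)
      (seq.map (Fml.replaceAll (Sum.inr a) (Sum.inl y))) := by
  intro i hi
  have hi' : i < seq.length := by simpa using hi
  have hget : ∀ (j : Nat) (hj : j < (seq.map (Fml.replaceAll (Sum.inr a) (Sum.inl y))).length)
      (hj' : j < seq.length),
      (seq.map (Fml.replaceAll (Sum.inr a) (Sum.inl y))).get ⟨j, hj⟩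
        = Fml.replaceAll (Sum.inr a) (Sum.inl y) (seq.get ⟨j, hj'⟩) := by
    intro j hj hj'
    simp [List.get_eq_getElem, List.getElem_map]
  rcases hp i hi' with h | h | ⟨j, k, hj, hk, h⟩ | ⟨j, hj, x, h⟩
  · left
    rw [hget i hi hi']
    exact RWaux.replaceAll_axiom h (hy _ (List.get_mem seq ⟨i, hi'⟩))
  · right; left
    rw [hget i hi hi']
    exact RWaux.replaceAll_csv hvc h (hy _ (List.get_mem seq ⟨i, hi'⟩))
  · right; right; left
    refine ⟨j, k, hj, hk, ?_⟩
    rw [hget k _ (Nat.lt_trans hk hi'), hget j _ (Nat.lt_trans hj hi'), hget i hi hi', h]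
    rfl
  · right; right; right
    refine ⟨j, hj, x, ?_⟩
    rw [hget i hi hi', hget j _ (Nat.lt_trans hj hi'), h]
    rfl
end
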